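/- arXiv:1007.0473 — 3 statements merged into one kernel-verified Lean document; each statement's English description precedes it below -/
import Mathlib

section
/- Let 𝔛 be a symmetric association scheme of class d ≥ 2 such that θ*_0, θ*_1, …, θ*_d are mutually distinct. Then the following are equivalent: (1) 𝔛 is a Q-polynomial scheme with respect to E_1, i.e., Q-polynomial with respect to some ordering E_0, E_1, E_{i_2}, …, E_{i_d}; (2) there exists l ∈ {2, 3, …, d} such that for every i ∈ {1, 2, …, d}, ∏_{j=1, j≠i}^d (θ*_0 − θ*_j)/(θ*_i − θ*_j) = −p_i(l). Moreover, if (2) holds then l = i_d, the last index of the Q-polynomial ordering. -/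
open Matrix BigOperators Finset

/-- A symmetric association scheme of class `d` on a finite vertex set `V`,
bundled together with its adjacency matrices, primitive idempotents,
eigenmatrices `P`, `Q` and Krein parameters. -/
structure SymmAssocScheme (d : ℕ) (V : Type*) [Fintype V] [DecidableEq V] where
  /-- the relations `R_0, …, R_d` -/
  R : Fin (d + 1) → Set (V × V)
  R_nonempty : ∀ i, (R i).Nonempty
  R_zero : R 0 = {p : V × V | p.1 = p.2}
  R_cover : ∀ p : V × V, ∃ i, p ∈ R i
  R_disjoint : ∀ i j, i ≠ j → R i ∩ R j = ∅
  R_symm : ∀ i, ∀ x y : V, (x, y) ∈ R i → (y, x) ∈ R i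
  /-- the intersection numbers `p_{ij}^k` -/
  pnum : Fin (d + 1) → Fin (d + 1) → Fin (d + 1) → ℕ
  pnum_spec : ∀ i j k, ∀ x y : V, (x, y) ∈ R k →
    pnum i j k = {z : V | (x, z) ∈ R i ∧ (z, y) ∈ R j}.ncard
  /-- the adjacency matrices `A_0, …, A_d` -/
  A : Fin (d + 1) → Matrix V V ℂ
  A_of_mem : ∀ i, ∀ x y : V, (x, y) ∈ R i → A i x y = 1
  A_of_not_mem : ∀ i, ∀ x y : V, (x, y) ∉ R i → A i x y = 0
  /-- the primitive idempotents `E_0, …, E_d` -/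
  E : Fin (d + 1) → Matrix V V ℂ
  E_zero : E 0 = (Fintype.card V : ℂ)⁻¹ • Matrix.of (fun _ _ => (1 : ℂ))
  E_sum : ∑ i, E i = (1 : Matrix V V ℂ)
  E_mul : ∀ i j, E i * E j = if i = j then E i else 0
  E_ne_zero : ∀ i, E i ≠ 0
  /-- the first eigenmatrix: `P i j = p_i(j)` -/
  P : Fin (d + 1) → Fin (d + 1) → ℝ
  /-- the second eigenmatrix: `Q i j = q_i(j)`; in particular `θ*_j = Q 1 j` -/
  Q : Fin (d + 1) → Fin (d + 1) → ℝ
  A_eq : ∀ i, A i = ∑ j, (P i j : ℂ) • E j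
  E_eq : ∀ i, E i = (Fintype.card V : ℂ)⁻¹ • ∑ j, (Q i j : ℂ) • A j
  /-- the Krein parameters `q_{ij}^k` -/
  krein : Fin (d + 1) → Fin (d + 1) → Fin (d + 1) → ℝ
  krein_spec : ∀ i j, Matrix.hadamard (E i) (E j) =
    (Fintype.card V : ℂ)⁻¹ • ∑ k, (krein i j k : ℂ) • E k
  krein_nonneg : ∀ i j k, 0 ≤ krein i j k

namespace SymmAssocScheme

variable {d : ℕ} {V : Type*} [Fintype V] [DecidableEq V]

/-- the `h`-fold Hadamard power `E_1^{∘h}` of `E_1`, with `E_1^{∘0} = J`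
the all-ones matrix. -/
noncomputable def hadPowE1 (S : SymmAssocScheme d V) : ℕ → Matrix V V ℂ
  | 0 => Matrix.of fun _ _ => 1
  | n + 1 => Matrix.hadamard (hadPowE1 S n) (S.E 1)

/-- `N h` is the set of indices `j` such that `E_j` is a component of `E_1^{∘h}`
(i.e. `E_j · E_1^{∘h} ≠ 0`) but not a component of `E_1^{∘l}` for any `l < h`. -/
def N (S : SymmAssocScheme d V) (h : ℕ) : Set (Fin (d + 1)) :=
  {j | S.E j * S.hadPowE1 h ≠ 0 ∧ ∀ l < h, S.E j * S.hadPowE1 l = 0}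

/-- `𝔛` is `Q`-polynomial with respect to the ordering `E_{σ 0}, E_{σ 1}, …, E_{σ d}`:
for each `h` there is a polynomial `v*_h` of degree exactly `h` with
`q_{σ h}(j) = v*_h(q_1(j))` for all `j`. -/
def IsQPolyOrdering (S : SymmAssocScheme d V) (σ : Equiv.Perm (Fin (d + 1))) : Prop :=
  ∀ h : Fin (d + 1), ∃ v : Polynomial ℝ, v.degree = (h : ℕ) ∧
    ∀ j, S.Q (σ h) j = v.eval (S.Q 1 j)

/-- `𝔛` is `Q`-polynomial with respect to `E_1`: it is `Q`-polynomial with respect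
to some ordering of the form `E_0, E_1, E_{i_2}, …, E_{i_d}`. -/
def IsQPolyE1 (S : SymmAssocScheme d V) : Prop :=
  ∃ σ : Equiv.Perm (Fin (d + 1)), σ 0 = 0 ∧ σ 1 = 1 ∧ S.IsQPolyOrdering σ

/-- `𝔛` is `P`-polynomial with respect to the ordering `A_{σ 0}, A_{σ 1}, …, A_{σ d}`. -/
def IsPPolyOrdering (S : SymmAssocScheme d V) (σ : Equiv.Perm (Fin (d + 1))) : Prop :=
  ∀ h : Fin (d + 1), ∃ v : Polynomial ℝ, v.degree = (h : ℕ) ∧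
    ∀ j, S.P (σ h) j = v.eval (S.P 1 j)

/-- `𝔛` is `P`-polynomial with respect to `A_1`. -/
def IsPPolyA1 (S : SymmAssocScheme d V) : Prop :=
  ∃ σ : Equiv.Perm (Fin (d + 1)), σ 0 = 0 ∧ σ 1 = 1 ∧ S.IsPPolyOrdering σ

/-- the ratio `K_i = ∏_{j=1, j≠i}^d (θ*_0 − θ*_j)/(θ*_i − θ*_j)`,
where `θ*_j = q_1(j)`. -/
noncomputable def K (S : SymmAssocScheme d V) (i : Fin (d + 1)) : ℝ :=
  ∏ j ∈ Finset.univ.filter (fun j => j ≠ 0 ∧ j ≠ i),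
    (S.Q 1 0 - S.Q 1 j) / (S.Q 1 i - S.Q 1 j)

end SymmAssocScheme

namespace S0Gen
open Polynomial

lemma vand_inj {n : ℕ} (v : Fin n → ℝ) (hv : Function.Injective v) {u : Fin n → ℝ}
    (h : ∀ i : Fin n, ∑ k, v k ^ (i : ℕ) * u k = 0) : u = 0 := by
  classical
  set M : Matrix (Fin n) (Fin n) ℝ := (Matrix.vandermonde v).transpose with hM
  have hdet : M.det ≠ 0 := by
    rw [Matrix.det_transpose, Matrix.det_vandermonde]
    refine Finset.prod_ne_zero_iff.mpr fun i _ => Finset.prod_ne_zero_iff.mpr fun j hj => ?_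
    exact sub_ne_zero_of_ne fun hh => (Finset.mem_Ioi.mp hj).ne' (hv hh)
  have hmv : M.mulVec u = 0 := by
    funext i
    rw [Matrix.mulVec, dotProduct]
    simpa [hM, Matrix.transpose_apply, Matrix.vandermonde] using h i
  have hunit : IsUnit M.det := isUnit_iff_ne_zero.mpr hdet
  have := congrArg (fun w => M⁻¹.mulVec w) hmv
  simpa [Matrix.mulVec_mulVec, Matrix.nonsing_inv_mul M hunit] using this

lemma vand_partial {d : ℕ} (θ : Fin (d + 1) → ℝ) (hθ : Function.Injective θ)
    {u : Fin (d + 1) → ℝ} (hu0 : u 0 = 0)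
    (h : ∀ m : ℕ, m < d → ∑ k, θ k ^ m * u k = 0) : u = 0 := by
  classical
  have hsucc : ∀ i : Fin d, ∑ k : Fin d, (θ k.succ) ^ (i : ℕ) * u k.succ = 0 := by
    intro i
    have h2 := h i (i.isLt)
    rw [Fin.sum_univ_succ, hu0, mul_zero, zero_add] at h2
    exact h2
  have hinj : Function.Injective (fun k : Fin d => θ k.succ) :=
    fun a b hab => Fin.succ_injective d (hθ hab)
  have := vand_inj _ hinj hsucc
  funext k
  cases k using Fin.cases with
  | zero => exact hu0
  | succ i => exact congrFun this i

lemma basis_coeff_top {d : ℕ} (θ : Fin (d + 1) → ℝ) (hθ : Function.Injective θ)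
    (i : Fin (d + 1)) :
    (Lagrange.basis Finset.univ θ i).coeff d = Lagrange.nodalWeight Finset.univ θ i := by
  classical
  have hvs : Set.InjOn θ ↑(Finset.univ : Finset (Fin (d + 1))) := fun a _ b _ hab => hθ hab
  have hnd : (Lagrange.basis Finset.univ θ i).natDegree = d := by
    rw [Lagrange.natDegree_basis hvs (Finset.mem_univ i)]
    simp
  have hlc : (Lagrange.basis Finset.univ θ i).leadingCoeff
      = Lagrange.nodalWeight Finset.univ θ i := by
    rw [Lagrange.basis, Polynomial.leadingCoeff_prod, Lagrange.nodalWeight]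
    refine Finset.prod_congr rfl fun j hj => ?_
    have hij : θ i ≠ θ j := by
      intro hh
      exact (Finset.mem_erase.mp hj).1.symm (hθ hh)
    rw [Lagrange.basisDivisor, Polynomial.leadingCoeff_mul, Polynomial.leadingCoeff_C,
      (Polynomial.monic_X_sub_C (θ j)).leadingCoeff, mul_one]
  have hcn := Polynomial.coeff_natDegree (p := Lagrange.basis Finset.univ θ i)
  rw [hnd, hlc] at hcn
  exact hcn

lemma lagrange_sum_zero {d : ℕ} (θ : Fin (d + 1) → ℝ) (hθ : Function.Injective θ)
    {h : ℕ} (hh : h < d) :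
    ∑ k, θ k ^ h * Lagrange.nodalWeight Finset.univ θ k = 0 := by
  classical
  have hvs : Set.InjOn θ ↑(Finset.univ : Finset (Fin (d + 1))) := fun a _ b _ hab => hθ hab
  have hXh : (Polynomial.X : ℝ[X]) ^ h
      = Lagrange.interpolate Finset.univ θ (fun i => (θ i) ^ h) := by
    have hdeg : ((Polynomial.X : ℝ[X]) ^ h).degree < (Finset.univ : Finset (Fin (d+1))).card := by
      rw [Polynomial.degree_X_pow]
      simp only [Finset.card_univ, Fintype.card_fin]
      exact_mod_cast Nat.lt_succ_of_lt hh
    have := Lagrange.eq_interpolate hvs hdeg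
    convert this using 2
    simp [Polynomial.eval_pow]
  have hc := congrArg (fun p : ℝ[X] => p.coeff d) hXh
  rw [Polynomial.coeff_X_pow] at hc
  rw [if_neg (by omega)] at hc
  rw [Lagrange.interpolate_apply, Polynomial.finset_sum_coeff] at hc
  have h2 : ∑ k, θ k ^ h * Lagrange.nodalWeight Finset.univ θ k
      = ∑ k : Fin (d + 1), (Polynomial.C (θ k ^ h) * Lagrange.basis Finset.univ θ k).coeff d :=
    Finset.sum_congr rfl fun k _ => by
      rw [Polynomial.coeff_C_mul, basis_coeff_top θ hθ k]
  rw [h2, ← hc]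

lemma degree_lt_zero {p : ℝ[X]} (hp : p.degree < (0 : ℕ)) : p = 0 := by
  have hb : p.degree = ⊥ := Nat.WithBot.lt_zero_iff.mp (by exact_mod_cast hp)
  exact Polynomial.degree_eq_bot.mp hb

/-- any polynomial of degree `< h` is a combination of `v 0, …, v (h-1)` for a family
of exact degrees. -/
lemma span_lt {n : ℕ} (v : Fin (n + 1) → ℝ[X]) (hv : ∀ m, (v m).degree = (m : ℕ)) :
    ∀ h : ℕ, h ≤ n + 1 → ∀ p : ℝ[X], p.degree < (h : ℕ) →
    ∃ a : Fin (n + 1) → ℝ, (∀ m : Fin (n + 1), h ≤ (m : ℕ) → a m = 0)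
      ∧ p = ∑ m, Polynomial.C (a m) * v m := by
  classical
  intro h
  induction h with
  | zero =>
    intro _ p hp
    refine ⟨0, fun m _ => rfl, ?_⟩
    rw [degree_lt_zero hp]
    simp
  | succ h ih =>
    intro hh p hp
    set m0 : Fin (n + 1) := ⟨h, by omega⟩ with hm0
    have hvm0 : (v m0).coeff h ≠ 0 :=
      Polynomial.coeff_ne_zero_of_eq_degree (hv m0)
    set c : ℝ := p.coeff h / (v m0).coeff h with hc
    set q : ℝ[X] := p - Polynomial.C c * v m0 with hq
    have hqd : q.degree < (h : ℕ) := by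
      rw [Polynomial.degree_lt_iff_coeff_zero]
      intro t ht
      have ht' : (h : ℕ) ≤ t := by exact_mod_cast ht
      rcases eq_or_lt_of_le ht' with he | hlt
      · rw [hq]
        simp only [Polynomial.coeff_sub, Polynomial.coeff_C_mul]
        rw [← he]
        rw [hc, div_mul_cancel₀ _ hvm0, sub_self]
      · rw [hq]
        simp only [Polynomial.coeff_sub, Polynomial.coeff_C_mul]
        have h1 : p.coeff t = 0 := by
          apply Polynomial.coeff_eq_zero_of_degree_lt
          exact lt_of_lt_of_le hp (by exact_mod_cast Nat.succ_le_of_lt hlt)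
        have h2 : (v m0).coeff t = 0 := by
          apply Polynomial.coeff_eq_zero_of_degree_lt
          rw [hv m0]
          exact_mod_cast hlt
        rw [h1, h2, mul_zero, sub_self]
    obtain ⟨a, ha0, haeq⟩ := ih (by omega) q hqd
    refine ⟨fun m => if m = m0 then c else a m, ?_, ?_⟩
    · intro m hm
      have hmm : m ≠ m0 := by
        intro he
        have : (m : ℕ) = h := by rw [he]
        omega
      show (if m = m0 then c else a m) = 0
      rw [if_neg hmm]
      exact ha0 m (by omega)
    · have hp' : p = q + Polynomial.C c * v m0 := by rw [hq]; ring
      have ham0 : a m0 = 0 := ha0 m0 (by simp [hm0])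
      have hsplit1 : ∑ m, Polynomial.C (a m) * v m
          = ∑ m ∈ Finset.univ.erase m0, Polynomial.C (a m) * v m := by
        rw [← Finset.sum_erase_add _ _ (Finset.mem_univ m0), ham0]
        simp
      have hsplit2 : ∑ m, Polynomial.C (if m = m0 then c else a m) * v m
          = (∑ m ∈ Finset.univ.erase m0, Polynomial.C (a m) * v m)
            + Polynomial.C c * v m0 := by
        rw [← Finset.sum_erase_add _ _ (Finset.mem_univ m0), if_pos rfl]
        congr 1
        exact Finset.sum_congr rfl fun m hm => by rw [if_neg (Finset.mem_erase.mp hm).1]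
      rw [hp', haeq, hsplit1, hsplit2]

lemma span_pow {n : ℕ} (v : Fin (n + 1) → ℝ[X]) (hv : ∀ m, (v m).degree = (m : ℕ))
    (h : Fin (n + 1)) :
    ∃ a : Fin (n + 1) → ℝ, (∀ m : Fin (n + 1), (h : ℕ) < (m : ℕ) → a m = 0) ∧ a h ≠ 0
      ∧ (Polynomial.X : ℝ[X]) ^ (h : ℕ) = ∑ m, Polynomial.C (a m) * v m := by
  obtain ⟨a, ha0, haeq⟩ := span_lt v hv ((h : ℕ) + 1) (by omega)
    ((Polynomial.X : ℝ[X]) ^ (h : ℕ))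
    (by rw [Polynomial.degree_X_pow]; exact_mod_cast Nat.lt_succ_self _)
  refine ⟨a, fun m hm => ha0 m (by omega), ?_, haeq⟩
  have hco := congrArg (fun p : ℝ[X] => p.coeff (h : ℕ)) haeq
  rw [Polynomial.coeff_X_pow, if_pos rfl, Polynomial.finset_sum_coeff] at hco
  have hsum : ∑ m : Fin (n + 1), (Polynomial.C (a m) * v m).coeff (h : ℕ)
      = a h * (v h).coeff (h : ℕ) := by
    rw [Finset.sum_congr rfl fun m (_ : m ∈ Finset.univ) => Polynomial.coeff_C_mul (v m)]
    refine Finset.sum_eq_single h (fun m _ hm => ?_) (fun hmem => absurd (Finset.mem_univ h) hmem)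
    rcases lt_trichotomy ((m : ℕ)) ((h : ℕ)) with hlt | heq | hgt
    · rw [Polynomial.coeff_eq_zero_of_degree_lt (by rw [hv m]; exact_mod_cast hlt), mul_zero]
    · exact absurd (Fin.ext heq) hm
    · rw [ha0 m (by omega), zero_mul]
  rw [hsum] at hco
  intro hz
  rw [hz, zero_mul] at hco
  exact one_ne_zero hco

lemma CW_zero {d : ℕ} (θ : Fin (d + 1) → ℝ) (hθ : Function.Injective θ) :
    (∏ j ∈ Finset.univ.erase 0, (θ 0 - θ j)) * Lagrange.nodalWeight Finset.univ θ 0 = 1 := by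
  show (∏ j ∈ Finset.univ.erase 0, (θ 0 - θ j)) * ∏ j ∈ Finset.univ.erase 0, (θ 0 - θ j)⁻¹ = 1
  rw [← Finset.prod_mul_distrib]
  rw [Finset.prod_congr rfl fun j hj => mul_inv_cancel₀
    (sub_ne_zero_of_ne fun hh => (Finset.mem_erase.mp hj).1.symm (hθ hh))]
  exact Finset.prod_const_one

lemma Kprod_eq {d : ℕ} (θ : Fin (d + 1) → ℝ) (hθ : Function.Injective θ)
    {i : Fin (d + 1)} (hi : i ≠ 0) :
    (∏ j ∈ Finset.univ.filter (fun j => j ≠ 0 ∧ j ≠ i), (θ 0 - θ j) / (θ i - θ j))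
    = -((∏ j ∈ Finset.univ.erase 0, (θ 0 - θ j)) * Lagrange.nodalWeight Finset.univ θ i) := by
  classical
  set s := Finset.univ.filter (fun j : Fin (d + 1) => j ≠ 0 ∧ j ≠ i) with hs
  have hi_not_s : i ∉ s := by simp [hs]
  have h0_not_s : (0 : Fin (d + 1)) ∉ s := by simp [hs]
  have hset1 : Finset.univ.erase 0 = insert i s := by
    ext j
    simp only [Finset.mem_erase, Finset.mem_univ, and_true, Finset.mem_insert, hs,
      Finset.mem_filter, true_and]
    constructor
    · intro hj
      by_cases hji : j = i
      · exact Or.inl hji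
      · exact Or.inr ⟨hj, hji⟩
    · rintro (rfl | ⟨hj, -⟩)
      · exact hi
      · exact hj
  have hset2 : Finset.univ.erase i = insert 0 s := by
    ext j
    simp only [Finset.mem_erase, Finset.mem_univ, and_true, Finset.mem_insert, hs,
      Finset.mem_filter, true_and]
    constructor
    · intro hj
      by_cases hj0 : j = 0
      · exact Or.inl hj0
      · exact Or.inr ⟨hj0, hj⟩
    · rintro (rfl | ⟨-, hj⟩)
      · exact Ne.symm hi
      · exact hj
  have hB : (∏ j ∈ s, (θ i - θ j)) ≠ 0 :=
    Finset.prod_ne_zero_iff.mpr fun j hj =>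
      sub_ne_zero_of_ne fun hh => ((Finset.mem_filter.mp hj).2).2 ((hθ hh).symm)
  have h0i : θ i - θ 0 ≠ 0 := sub_ne_zero_of_ne fun hh => hi (hθ hh)
  show _ = -((∏ j ∈ Finset.univ.erase 0, (θ 0 - θ j)) * ∏ j ∈ Finset.univ.erase i, (θ i - θ j)⁻¹)
  rw [Finset.prod_div_distrib, hset1, hset2, Finset.prod_insert hi_not_s,
    Finset.prod_insert h0_not_s, Finset.prod_inv_distrib]
  field_simp
  ring

end S0Gen


namespace S0A
open SymmAssocScheme
variable {d : ℕ} {V : Type*} [Fintype V] [DecidableEq V]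

lemma v_nonempty (S : SymmAssocScheme d V) : Nonempty V := ⟨((S.R_nonempty 0).choose).1⟩

lemma card_pos (S : SymmAssocScheme d V) : 0 < Fintype.card V := by
  have := v_nonempty S; exact Fintype.card_pos

lemma nV_ne (S : SymmAssocScheme d V) : (Fintype.card V : ℝ) ≠ 0 := by
  exact_mod_cast (card_pos S).ne'

lemma nVC_ne (S : SymmAssocScheme d V) : (Fintype.card V : ℂ) ≠ 0 := by
  exact_mod_cast (card_pos S).ne'

variable (S : SymmAssocScheme d V)

lemma not_mem_of_mem {k x y} (h : (x, y) ∈ S.R k) {i} (hik : i ≠ k) : (x, y) ∉ S.R i := by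
  intro hm
  have := S.R_disjoint i k hik
  exact absurd (Set.mem_inter hm h) (by rw [this]; exact Set.notMem_empty _)

lemma A_apply_of_mem {k x y} (h : (x, y) ∈ S.R k) (i) :
    S.A i x y = if i = k then 1 else 0 := by
  by_cases hik : i = k
  · simp [hik, S.A_of_mem k x y h]
  · simp [hik, S.A_of_not_mem i x y (not_mem_of_mem S h hik)]

lemma mem_R0 (x : V) : (x, x) ∈ S.R 0 := by rw [S.R_zero]; exact rfl

lemma E_apply {k x y} (h : (x, y) ∈ S.R k) (j) :
    S.E j x y = (((Fintype.card V : ℝ)⁻¹ * S.Q j k : ℝ) : ℂ) := by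
  have hE := congrFun (congrFun (S.E_eq j) x) y
  rw [Matrix.smul_apply, Matrix.sum_apply] at hE
  simp only [Matrix.smul_apply, smul_eq_mul] at hE
  rw [hE]
  have h2 : ∀ m, (S.Q j m : ℂ) * S.A m x y = if m = k then (S.Q j k : ℂ) else 0 := by
    intro m
    rw [A_apply_of_mem S h m]
    by_cases hm : m = k <;> simp [hm]
  rw [Finset.sum_congr rfl (fun m _ => h2 m), Finset.sum_ite_eq' _ k]
  push_cast
  simp

lemma E_symm (j) (x y : V) : S.E j x y = S.E j y x := by
  obtain ⟨k, hk⟩ := S.R_cover (x, y)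
  rw [E_apply S hk j, E_apply S (S.R_symm k x y hk) j]

lemma smul_E_eq_zero {c : ℂ} {j} (h : c • S.E j = 0) : c = 0 :=
  (smul_eq_zero.mp h).resolve_right (S.E_ne_zero j)

/-- linear independence of the idempotents: coefficient extraction. -/
lemma E_coeff {c c' : Fin (d + 1) → ℂ}
    (h : ∑ j, c j • S.E j = ∑ j, c' j • S.E j) : c = c' := by
  funext i
  have h2 := congrArg (fun M => M * S.E i) h
  simp only [Finset.sum_mul, smul_mul_assoc, S.E_mul, smul_ite, smul_zero,
    Finset.sum_ite_eq', Finset.mem_univ, if_true] at h2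
  have h3 : (c i - c' i) • S.E i = 0 := by rw [sub_smul, h2, sub_self]
  exact sub_eq_zero.mp (smul_E_eq_zero S h3)

lemma A_mul_E (k j) : S.A k * S.E j = (S.P k j : ℂ) • S.E j := by
  rw [S.A_eq k, Finset.sum_mul]
  simp only [smul_mul_assoc, S.E_mul]
  rw [Finset.sum_congr rfl (fun m _ => by rw [smul_ite, smul_zero])]
  rw [Finset.sum_ite_eq' _ j]
  simp

lemma orth (i j) :
    ∑ k, S.Q i k * S.P k j = if i = j then (Fintype.card V : ℝ) else 0 := by
  have h0 : S.E i * S.E j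
      = ((Fintype.card V : ℂ)⁻¹ * ((∑ k, S.Q i k * S.P k j : ℝ) : ℂ)) • S.E j := by
    rw [S.E_eq i, Matrix.smul_mul, Finset.sum_mul]
    have hc : ∀ k ∈ Finset.univ, ((S.Q i k : ℂ) • S.A k) * S.E j
        = ((S.Q i k : ℂ) * (S.P k j : ℂ)) • S.E j := fun k _ => by
      rw [smul_mul_assoc, A_mul_E S k j, smul_smul]
    rw [Finset.sum_congr rfl hc, ← Finset.sum_smul, smul_smul]
    norm_cast
  have h1 : ((Fintype.card V : ℂ)⁻¹ * ((∑ k, S.Q i k * S.P k j : ℝ) : ℂ)) • S.E j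
      = if i = j then S.E i else 0 := by rw [← h0, S.E_mul]
  by_cases hij : i = j
  · subst hij
    simp only [if_true] at h1 ⊢
    have h2 : ((Fintype.card V : ℂ)⁻¹ * ((∑ k, S.Q i k * S.P k i : ℝ) : ℂ) - 1) • S.E i = 0 := by
      rw [sub_smul, one_smul, h1, sub_self]
    have h3 := sub_eq_zero.mp (smul_E_eq_zero S h2)
    have h4 := (inv_mul_eq_one₀ (nVC_ne S)).mp h3
    exact_mod_cast h4.symm
  · simp only [hij, if_false] at h1 ⊢
    have h3 := smul_E_eq_zero S h1
    rcases mul_eq_zero.mp h3 with h4 | h4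
    · exact absurd h4 (inv_ne_zero (nVC_ne S))
    · exact_mod_cast h4

lemma A_zero_eq_one : S.A 0 = 1 := by
  ext x y
  by_cases hxy : x = y
  · subst hxy
    rw [S.A_of_mem 0 x x (mem_R0 S x), Matrix.one_apply_eq]
  · have hnm : (x, y) ∉ S.R 0 := by rw [S.R_zero]; exact hxy
    rw [S.A_of_not_mem 0 x y hnm, Matrix.one_apply_ne hxy]

lemma P_zero (j) : S.P 0 j = 1 := by
  have h1 : ∑ m, (S.P 0 m : ℂ) • S.E m = ∑ m, (1 : ℂ) • S.E m := by
    rw [← S.A_eq 0, A_zero_eq_one S]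
    simp [S.E_sum]
  have := congrFun (E_coeff S h1) j
  exact_mod_cast this

lemma Q_zero (k) : S.Q 0 k = 1 := by
  obtain ⟨⟨x, y⟩, hxy⟩ := S.R_nonempty k
  have h1 := E_apply S hxy 0
  have h2 : S.E 0 x y = ((Fintype.card V : ℂ))⁻¹ := by
    rw [S.E_zero]; simp
  rw [h2] at h1
  have h3 : ((Fintype.card V : ℝ)⁻¹ : ℂ) = (((Fintype.card V : ℝ)⁻¹ * S.Q 0 k : ℝ) : ℂ) := by
    rw [← h1]; push_cast; simp
  have h4 : (Fintype.card V : ℝ)⁻¹ = (Fintype.card V : ℝ)⁻¹ * S.Q 0 k := by exact_mod_cast h3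
  have h5 : (1 : ℝ) = S.Q 0 k :=
    mul_left_cancel₀ (inv_ne_zero (nV_ne S)) (by rw [mul_one]; exact h4)
  exact h5.symm

lemma orth' (i k) :
    ∑ j, S.P i j * S.Q j k = if i = k then (Fintype.card V : ℝ) else 0 := by
  classical
  set n : ℝ := (Fintype.card V : ℝ) with hn
  let Qm : Matrix (Fin (d + 1)) (Fin (d + 1)) ℝ := Matrix.of fun i k => n⁻¹ * S.Q i k
  let Pm : Matrix (Fin (d + 1)) (Fin (d + 1)) ℝ := Matrix.of fun k j => S.P k j
  have hQP : Qm * Pm = 1 := by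
    ext i j
    simp only [Qm, Pm, Matrix.mul_apply, Matrix.of_apply, mul_assoc, ← Finset.mul_sum]
    rw [orth S i j]
    by_cases hij : i = j
    · subst hij
      rw [Matrix.one_apply_eq]
      simp [hn, inv_mul_cancel₀ (nV_ne S)]
    · rw [Matrix.one_apply_ne hij]
      simp [hij]
  have hPQ : Pm * Qm = 1 := mul_eq_one_comm.mp hQP
  have := congrFun (congrFun hPQ i) k
  simp only [Pm, Qm, Matrix.mul_apply, Matrix.of_apply] at this
  have h2 : ∑ j, S.P i j * (n⁻¹ * S.Q j k) = n⁻¹ * ∑ j, S.P i j * S.Q j k := by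
    rw [Finset.mul_sum]; exact Finset.sum_congr rfl fun j _ => by ring
  rw [h2] at this
  by_cases hik : i = k
  · subst hik
    rw [Matrix.one_apply_eq] at this
    simp only [if_true]
    exact ((inv_mul_eq_one₀ (nV_ne S)).mp this).symm
  · rw [Matrix.one_apply_ne hik] at this
    simp only [hik, if_false]
    rcases mul_eq_zero.mp this with h | h
    · exact absurd h (inv_ne_zero (nV_ne S))
    · exact h

/-- the coefficient of `E_j` in the Hadamard power `E_1^{∘h}`. -/
noncomputable def lam (S : SymmAssocScheme d V) (h : ℕ) (j : Fin (d + 1)) : ℝ :=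
  (Fintype.card V : ℝ)⁻¹ ^ h * ∑ k, S.Q 1 k ^ h * S.P k j

lemma lam_zero (j) : lam S 0 j = if j = 0 then (Fintype.card V : ℝ) else 0 := by
  have h1 : lam S 0 j = ∑ k, S.Q 0 k * S.P k j := by
    simp only [lam, pow_zero, one_mul]
    exact Finset.sum_congr rfl fun k _ => by rw [Q_zero S k]; ring
  rw [h1, orth S 0 j]
  by_cases hj : j = 0 <;> simp [hj, eq_comm]

lemma lam_one (j) : lam S 1 j = if j = 1 then 1 else 0 := by
  have h1 : lam S 1 j = (Fintype.card V : ℝ)⁻¹ * ∑ k, S.Q 1 k * S.P k j := by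
    simp [lam]
  rw [h1, orth S 1 j]
  by_cases hj : j = 1
  · simp [hj, inv_mul_cancel₀ (nV_ne S)]
  · rw [if_neg (fun h => hj h.symm), if_neg hj, mul_zero]

lemma hadPow_apply {k} {x y : V} (h : (x, y) ∈ S.R k) (n : ℕ) :
    S.hadPowE1 n x y = ((((Fintype.card V : ℝ)⁻¹ * S.Q 1 k) ^ n : ℝ) : ℂ) := by
  induction n with
  | zero => simp [SymmAssocScheme.hadPowE1]
  | succ n ih =>
    show (Matrix.hadamard (S.hadPowE1 n) (S.E 1)) x y = _
    rw [Matrix.hadamard_apply, ih, E_apply S h 1]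
    push_cast
    ring

lemma hadPow_eq (n : ℕ) :
    S.hadPowE1 n = ∑ j, ((lam S n j : ℝ) : ℂ) • S.E j := by
  ext x y
  obtain ⟨k, hk⟩ := S.R_cover (x, y)
  rw [hadPow_apply S hk n, Matrix.sum_apply]
  simp only [Matrix.smul_apply, smul_eq_mul]
  have h1 : ∀ j, ((lam S n j : ℝ) : ℂ) * S.E j x y
      = ((lam S n j * ((Fintype.card V : ℝ)⁻¹ * S.Q j k) : ℝ) : ℂ) := by
    intro j
    rw [E_apply S hk j]
    push_cast; ring
  rw [Finset.sum_congr rfl (fun j _ => h1 j), ← Complex.ofReal_sum]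
  congr 1
  have h2 : ∑ j, lam S n j * ((Fintype.card V : ℝ)⁻¹ * S.Q j k)
      = (Fintype.card V : ℝ)⁻¹ * ∑ j, lam S n j * S.Q j k := by
    rw [Finset.mul_sum]; exact Finset.sum_congr rfl fun j _ => by ring
  have h3 : ∑ j, lam S n j * S.Q j k
      = (Fintype.card V : ℝ)⁻¹ ^ n * ∑ i, S.Q 1 i ^ n * ∑ j, S.P i j * S.Q j k := by
    have lhs : ∀ j, lam S n j * S.Q j k
        = ∑ i, (Fintype.card V : ℝ)⁻¹ ^ n * (S.Q 1 i ^ n * (S.P i j * S.Q j k)) := by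
      intro j
      rw [lam, Finset.mul_sum, Finset.sum_mul]
      exact Finset.sum_congr rfl fun i _ => by ring
    rw [Finset.sum_congr rfl fun j _ => lhs j, Finset.sum_comm, Finset.mul_sum]
    refine Finset.sum_congr rfl fun i _ => ?_
    simp only [Finset.mul_sum]
    try exact Finset.sum_congr rfl fun j _ => by ring
  have h4 : ∑ i, S.Q 1 i ^ n * ∑ j, S.P i j * S.Q j k = S.Q 1 k ^ n * (Fintype.card V : ℝ) := by
    rw [Finset.sum_congr rfl (fun i (_ : i ∈ Finset.univ) => by rw [orth' S i k])]
    simp only [mul_ite, mul_zero]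
    rw [Finset.sum_ite_eq' Finset.univ k]
    simp
  rw [h2, h3, h4, mul_pow]
  field_simp
  rw [mul_assoc, mul_div_cancel_left₀ _ (nV_ne S)]

lemma lam_rec (n : ℕ) (m) :
    lam S (n + 1) m = (Fintype.card V : ℝ)⁻¹ * ∑ j, lam S n j * S.krein j 1 m := by
  have h1 : S.hadPowE1 (n + 1) = Matrix.hadamard (S.hadPowE1 n) (S.E 1) := rfl
  have h2 : Matrix.hadamard (S.hadPowE1 n) (S.E 1)
      = ∑ j, ((lam S n j : ℝ) : ℂ) • Matrix.hadamard (S.E j) (S.E 1) := by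
    rw [hadPow_eq S n]
    ext x y
    simp [Matrix.hadamard_apply, Matrix.sum_apply, Finset.sum_mul, mul_assoc]
  have hterm : ∀ j : Fin (d + 1), ((lam S n j : ℝ) : ℂ) • Matrix.hadamard (S.E j) (S.E 1)
      = ∑ m', ((lam S n j * ((Fintype.card V : ℝ)⁻¹ * S.krein j 1 m') : ℝ) : ℂ) • S.E m' := by
    intro j
    rw [S.krein_spec j 1, smul_smul, Finset.smul_sum]
    refine Finset.sum_congr rfl fun m' _ => ?_
    rw [smul_smul]
    congr 1
    push_cast
    try ring
  have h3 : S.hadPowE1 (n + 1)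
      = ∑ m', (((Fintype.card V : ℝ)⁻¹ * ∑ j, lam S n j * S.krein j 1 m' : ℝ) : ℂ) • S.E m' := by
    rw [h1, h2, Finset.sum_congr rfl (fun j _ => hterm j), Finset.sum_comm]
    refine Finset.sum_congr rfl fun m' _ => ?_
    rw [← Finset.sum_smul, ← Complex.ofReal_sum]
    congr 2
    rw [Finset.mul_sum]
    exact Finset.sum_congr rfl fun j _ => by ring
  have h4 := E_coeff S ((hadPow_eq S (n + 1)).symm.trans h3)
  have h5 := congrFun h4 m
  exact_mod_cast h5

lemma lam_nonneg (n : ℕ) (j) : 0 ≤ lam S n j := by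
  induction n generalizing j with
  | zero =>
    rw [lam_zero S j]
    by_cases hj : j = 0
    · simp only [hj, if_true]
      positivity
    · simp [hj]
  | succ n ih =>
    rw [lam_rec S n j]
    have : 0 ≤ ∑ k, lam S n k * S.krein k 1 j :=
      Finset.sum_nonneg fun k _ => mul_nonneg (ih k) (S.krein_nonneg k 1 j)
    positivity

lemma trace_E (j) : Matrix.trace (S.E j) = ((S.Q j 0 : ℝ) : ℂ) := by
  have h1 : ∀ x : V, S.E j x x = (((Fintype.card V : ℝ)⁻¹ * S.Q j 0 : ℝ) : ℂ) :=
    fun x => E_apply S (mem_R0 S x) j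
  rw [Matrix.trace]
  simp only [Matrix.diag_apply]
  rw [Finset.sum_congr rfl fun x _ => h1 x, Finset.sum_const, Finset.card_univ,
    nsmul_eq_mul]
  push_cast
  rw [← mul_assoc, mul_inv_cancel₀ (nVC_ne S), one_mul]

lemma E_entry_real (j) (x y : V) : S.E j x y = (((S.E j x y).re : ℝ) : ℂ) := by
  obtain ⟨k, hk⟩ := S.R_cover (x, y)
  rw [E_apply S hk j]
  simp

lemma Q_col_zero_pos (j) : 0 < S.Q j 0 := by
  classical
  set r : V → V → ℝ := fun x y => (S.E j x y).re with hr
  have hre : ∀ x y, S.E j x y = ((r x y : ℝ) : ℂ) := fun x y => E_entry_real S j x y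
  have hEE : S.E j * S.E j = S.E j := by
    have := S.E_mul j j; simpa using this
  have h1 : ((S.Q j 0 : ℝ) : ℂ) = ((∑ x, ∑ y, r x y ^ 2 : ℝ) : ℂ) := by
    rw [← trace_E S j]
    nth_rewrite 1 [← hEE]
    rw [Matrix.trace]
    simp only [Matrix.diag_apply, Matrix.mul_apply]
    push_cast
    refine Finset.sum_congr rfl fun x _ => Finset.sum_congr rfl fun y _ => ?_
    rw [E_symm S j y x, hre x y]
    push_cast
    ring
  have h2 : S.Q j 0 = ∑ x, ∑ y, r x y ^ 2 := by exact_mod_cast h1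
  have h3 : 0 ≤ ∑ x, ∑ y, r x y ^ 2 :=
    Finset.sum_nonneg fun x _ => Finset.sum_nonneg fun y _ => sq_nonneg _
  rcases lt_or_eq_of_le h3 with h4 | h4
  · rw [h2]; exact h4
  · exfalso
    apply S.E_ne_zero j
    ext x y
    have h5 : ∀ x ∈ Finset.univ, ∑ y, r x y ^ 2 = 0 := by
      intro x _
      have := (Finset.sum_eq_zero_iff_of_nonneg
        (fun x _ => Finset.sum_nonneg fun y _ => sq_nonneg (r x y))).mp h4.symm
      exact this x (Finset.mem_univ x)
    have h6 := (Finset.sum_eq_zero_iff_of_nonneg (fun y _ => sq_nonneg (r x y))).mp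
      (h5 x (Finset.mem_univ x)) y (Finset.mem_univ y)
    have h7 : r x y = 0 := by
      have := sq_eq_zero_iff.mp h6; exact this
    rw [hre x y, h7]
    simp

lemma trace_EE (k m) : Matrix.trace (S.E k * S.E m)
    = if k = m then ((S.Q m 0 : ℝ) : ℂ) else 0 := by
  rw [S.E_mul k m]
  by_cases hkm : k = m
  · subst hkm; simp [trace_E S k]
  · simp [hkm]

lemma krein_symm (j m) : S.krein j 1 m * S.Q m 0 = S.krein m 1 j * S.Q j 0 := by
  classical
  have key : ∀ a b : Fin (d + 1),
      Matrix.trace (Matrix.hadamard (S.E a) (S.E 1) * S.E b)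
      = ((Fintype.card V : ℂ))⁻¹ * ((S.krein a 1 b * S.Q b 0 : ℝ) : ℂ) := by
    intro a b
    have hsum : (∑ k, ((S.krein a 1 k : ℂ) • S.E k) * S.E b)
        = ∑ k, (S.krein a 1 k : ℂ) • (S.E k * S.E b) :=
      Finset.sum_congr rfl fun k _ => smul_mul_assoc _ _ _
    rw [S.krein_spec a 1, Matrix.smul_mul, Matrix.trace_smul, Finset.sum_mul, hsum,
      Matrix.trace_sum]
    simp only [Matrix.trace_smul]
    rw [Finset.sum_congr rfl fun k (_ : k ∈ Finset.univ) => by rw [trace_EE S k b]]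
    simp only [smul_ite, smul_zero, Finset.sum_ite_eq', Finset.mem_univ, if_true]
    rw [smul_eq_mul, smul_eq_mul]
    push_cast
    ring
  have hT : ∀ a b : Fin (d + 1),
      Matrix.trace (Matrix.hadamard (S.E a) (S.E 1) * S.E b)
      = ∑ x, ∑ y, S.E a x y * S.E 1 x y * S.E b x y := by
    intro a b
    rw [Matrix.trace]
    simp only [Matrix.diag_apply, Matrix.mul_apply, Matrix.hadamard_apply]
    exact Finset.sum_congr rfl fun x _ => Finset.sum_congr rfl fun y _ => by
      rw [E_symm S b y x]
  have hswap : (∑ x, ∑ y, S.E j x y * S.E 1 x y * S.E m x y)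
      = ∑ x, ∑ y, S.E m x y * S.E 1 x y * S.E j x y :=
    Finset.sum_congr rfl fun x _ => Finset.sum_congr rfl fun y _ => by ring
  have h1 : ((Fintype.card V : ℂ))⁻¹ * ((S.krein j 1 m * S.Q m 0 : ℝ) : ℂ)
      = ((Fintype.card V : ℂ))⁻¹ * ((S.krein m 1 j * S.Q j 0 : ℝ) : ℂ) := by
    rw [← key j m, ← key m j, hT j m, hT m j, hswap]
  have h2 := mul_left_cancel₀ (inv_ne_zero (nVC_ne S)) h1
  exact_mod_cast h2

lemma exists_krein_ne (j) : ∃ m, S.krein j 1 m ≠ 0 ∧ S.krein m 1 j ≠ 0 := by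
  classical
  have hx : Nonempty V := v_nonempty S
  obtain ⟨x⟩ := hx
  have had : Matrix.hadamard (S.E j) (S.E 1) x x ≠ 0 := by
    rw [Matrix.hadamard_apply, E_apply S (mem_R0 S x) j, E_apply S (mem_R0 S x) 1]
    have hne : ((Fintype.card V : ℝ)⁻¹ * S.Q j 0) * ((Fintype.card V : ℝ)⁻¹ * S.Q 1 0) ≠ 0 := by
      have h1 := Q_col_zero_pos S j
      have h2 := Q_col_zero_pos S 1
      have h3 := (card_pos S)
      have h4 : (0:ℝ) < (Fintype.card V : ℝ) := by exact_mod_cast h3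
      positivity
    rw [← Complex.ofReal_mul]
    exact_mod_cast hne
  by_contra hcon
  push_neg at hcon
  have hall : ∀ m, S.krein j 1 m = 0 := by
    intro m
    by_contra hm
    have h2 := hcon m hm
    have h3 := krein_symm S j m
    rw [h2, zero_mul] at h3
    rcases mul_eq_zero.mp h3 with h | h
    · exact hm h
    · exact absurd h (Q_col_zero_pos S m).ne'
  apply had
  rw [S.krein_spec j 1]
  have hz : (∑ k, (S.krein j 1 k : ℂ) • S.E k) = 0 :=
    Finset.sum_eq_zero fun k _ => by rw [hall k]; simp
  rw [hz]
  simp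

lemma lam_step (n : ℕ) (m) :
    lam S (n + 1) m ≠ 0 ↔ ∃ j, lam S n j ≠ 0 ∧ S.krein j 1 m ≠ 0 := by
  rw [lam_rec S n m]
  have hinv : (Fintype.card V : ℝ)⁻¹ ≠ 0 := inv_ne_zero (nV_ne S)
  rw [mul_ne_zero_iff]
  constructor
  · rintro ⟨-, hs⟩
    by_contra hcon
    push_neg at hcon
    apply hs
    refine Finset.sum_eq_zero fun j _ => ?_
    by_cases hj : lam S n j = 0
    · rw [hj, zero_mul]
    · rw [hcon j hj, mul_zero]
  · rintro ⟨j, hj, hk⟩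
    refine ⟨hinv, ?_⟩
    have hterm : 0 < lam S n j * S.krein j 1 m := by
      rcases (lam_nonneg S n j).lt_or_eq with h | h
      · rcases (S.krein_nonneg j 1 m).lt_or_eq with h2 | h2
        · exact mul_pos h h2
        · exact absurd h2.symm hk
      · exact absurd h.symm hj
    have hpos : 0 < ∑ j, lam S n j * S.krein j 1 m := by
      refine Finset.sum_pos' (fun k _ => mul_nonneg (lam_nonneg S n k) (S.krein_nonneg k 1 m))
        ⟨j, Finset.mem_univ j, hterm⟩
    exact hpos.ne'

lemma lam_two_step (n : ℕ) {j} (h : lam S n j ≠ 0) : lam S (n + 2) j ≠ 0 := by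
  obtain ⟨m, h1, h2⟩ := exists_krein_ne S j
  have s1 : lam S (n + 1) m ≠ 0 := (lam_step S n m).mpr ⟨j, h, h1⟩
  exact (lam_step S (n + 1) j).mpr ⟨m, s1, h2⟩

lemma sum_pow_P (h : ℕ) (j) :
    ∑ k, S.Q 1 k ^ h * S.P k j = (Fintype.card V : ℝ) ^ h * lam S h j := by
  rw [lam, ← mul_assoc, ← mul_pow, mul_inv_cancel₀ (nV_ne S), one_pow, one_mul]

lemma P_vec_cancel {u : Fin (d + 1) → ℝ} (h : ∀ j, ∑ k, u k * S.P k j = 0) : u = 0 := by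
  classical
  set Pm : Matrix (Fin (d + 1)) (Fin (d + 1)) ℝ := Matrix.of (fun k j => S.P k j) with hPm
  set Qm : Matrix (Fin (d + 1)) (Fin (d + 1)) ℝ :=
    Matrix.of (fun i k => (Fintype.card V : ℝ)⁻¹ * S.Q i k) with hQm
  have hQP : Qm * Pm = 1 := by
    ext i j
    simp only [Qm, Pm, Matrix.mul_apply, Matrix.of_apply, mul_assoc, ← Finset.mul_sum]
    rw [orth S i j]
    by_cases hij : i = j
    · subst hij
      rw [Matrix.one_apply_eq]
      simp [inv_mul_cancel₀ (nV_ne S)]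
    · rw [Matrix.one_apply_ne hij]
      simp [hij]
  have hPQ : Pm * Qm = 1 := mul_eq_one_comm.mp hQP
  have hvm : Matrix.vecMul u Pm = 0 := by
    funext j
    rw [Matrix.vecMul, dotProduct]
    simpa [Pm] using h j
  have := congrArg (fun w => Matrix.vecMul w Qm) hvm
  simpa [Matrix.vecMul_vecMul, hPQ] using this

lemma qpoly_lam_formula (σ : Equiv.Perm (Fin (d + 1))) (hσ : S.IsQPolyOrdering σ)
    (h : Fin (d + 1)) :
    ∃ a : Fin (d + 1) → ℝ, (∀ m : Fin (d + 1), (h : ℕ) < (m : ℕ) → a m = 0) ∧ a h ≠ 0 ∧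
      ∀ r, lam S (h : ℕ) (σ r) = (Fintype.card V : ℝ)⁻¹ ^ (h : ℕ) * (a r * (Fintype.card V : ℝ)) := by
  classical
  choose vfam hdeg heval using hσ
  obtain ⟨a, ha0, hah, hXeq⟩ := S0Gen.span_pow vfam hdeg h
  refine ⟨a, ha0, hah, fun r => ?_⟩
  have hθh : ∀ k, S.Q 1 k ^ (h : ℕ) = ∑ m, a m * S.Q (σ m) k := by
    intro k
    have hev := congrArg (Polynomial.eval (S.Q 1 k)) hXeq
    rw [Polynomial.eval_pow, Polynomial.eval_X, Polynomial.eval_finset_sum] at hev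
    rw [hev]
    exact Finset.sum_congr rfl fun m _ => by
      rw [Polynomial.eval_mul, Polynomial.eval_C, ← heval m k]
  have hmain : ∑ k, S.Q 1 k ^ (h : ℕ) * S.P k (σ r) = a r * (Fintype.card V : ℝ) := by
    rw [Finset.sum_congr rfl fun k (_ : k ∈ Finset.univ) => by
      rw [hθh k, Finset.sum_mul]]
    rw [Finset.sum_comm]
    have hterm : ∀ m, ∑ k, a m * S.Q (σ m) k * S.P k (σ r)
        = a m * (if σ m = σ r then (Fintype.card V : ℝ) else 0) := by
      intro m
      rw [← orth S (σ m) (σ r), Finset.mul_sum]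
      exact Finset.sum_congr rfl fun k _ => by ring
    rw [Finset.sum_congr rfl fun m (_ : m ∈ Finset.univ) => hterm m]
    have hifs : ∀ m : Fin (d + 1), a m * (if σ m = σ r then (Fintype.card V : ℝ) else 0)
        = if m = r then a m * (Fintype.card V : ℝ) else 0 := by
      intro m
      by_cases hmr : m = r
      · subst hmr; simp
      · rw [if_neg (fun hc => hmr (σ.injective hc)), if_neg hmr, mul_zero]
    rw [Finset.sum_congr rfl fun m (_ : m ∈ Finset.univ) => hifs m, Finset.sum_ite_eq']
    simp
  rw [lam, hmain]

lemma qpoly_lam_tri (σ : Equiv.Perm (Fin (d + 1))) (hσ : S.IsQPolyOrdering σ)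
    {h : ℕ} {r : Fin (d + 1)} (hlt : h < (r : ℕ)) (hhd : h ≤ d) :
    lam S h (σ r) = 0 := by
  obtain ⟨a, ha0, -, hfor⟩ := qpoly_lam_formula S σ hσ ⟨h, by omega⟩
  have := hfor r
  simp only at this
  rw [this, ha0 r hlt, zero_mul, mul_zero]

lemma qpoly_lam_diag (σ : Equiv.Perm (Fin (d + 1))) (hσ : S.IsQPolyOrdering σ)
    (h : Fin (d + 1)) : lam S (h : ℕ) (σ h) ≠ 0 := by
  obtain ⟨a, -, hah, hfor⟩ := qpoly_lam_formula S σ hσ h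
  rw [hfor h]
  have h1 : (Fintype.card V : ℝ)⁻¹ ^ (h : ℕ) ≠ 0 := pow_ne_zero _ (inv_ne_zero (nV_ne S))
  exact mul_ne_zero h1 (mul_ne_zero hah (nV_ne S))

/-- the canonical kernel vector `C·W_k`. -/
noncomputable def ustar (S : SymmAssocScheme d V) (k : Fin (d + 1)) : ℝ :=
  (∏ j ∈ Finset.univ.erase 0, (S.Q 1 0 - S.Q 1 j))
    * Lagrange.nodalWeight Finset.univ (fun j => S.Q 1 j) k

section Kernel
variable (hθ : Function.Injective fun j : Fin (d + 1) => S.Q 1 j)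
include hθ

lemma ustar_zero : ustar S 0 = 1 := S0Gen.CW_zero _ hθ

lemma ustar_ident {h : ℕ} (hh : h < d) : ∑ k, S.Q 1 k ^ h * ustar S k = 0 := by
  have h1 : ∑ k, S.Q 1 k ^ h * ustar S k
      = (∏ j ∈ Finset.univ.erase 0, (S.Q 1 0 - S.Q 1 j))
        * ∑ k, S.Q 1 k ^ h * Lagrange.nodalWeight Finset.univ (fun j => S.Q 1 j) k := by
    rw [Finset.mul_sum]
    exact Finset.sum_congr rfl fun k _ => by rw [ustar]; ring
  rw [h1, S0Gen.lagrange_sum_zero _ hθ hh, mul_zero]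

lemma Kprod_eq_neg_ustar {i : Fin (d + 1)} (hi : i ≠ 0) :
    (∏ j ∈ Finset.univ.filter (fun j => j ≠ 0 ∧ j ≠ i),
      (S.Q 1 0 - S.Q 1 j) / (S.Q 1 i - S.Q 1 j)) = -ustar S i :=
  S0Gen.Kprod_eq _ hθ hi

lemma P_eq_ustar_of_cond2 {l : Fin (d + 1)}
    (hcond : ∀ i : Fin (d + 1), i ≠ 0 →
      (∏ j ∈ Finset.univ.filter (fun j => j ≠ 0 ∧ j ≠ i),
        (S.Q 1 0 - S.Q 1 j) / (S.Q 1 i - S.Q 1 j)) = -S.P i l) :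
    ∀ k, S.P k l = ustar S k := by
  intro k
  by_cases hk : k = 0
  · subst hk
    rw [P_zero S, ustar_zero S hθ]
  · have h1 := hcond k hk
    rw [Kprod_eq_neg_ustar S hθ hk] at h1
    exact (neg_injective h1).symm

lemma lam_l_zero_of_cond2 {l : Fin (d + 1)}
    (hcond : ∀ i : Fin (d + 1), i ≠ 0 →
      (∏ j ∈ Finset.univ.filter (fun j => j ≠ 0 ∧ j ≠ i),
        (S.Q 1 0 - S.Q 1 j) / (S.Q 1 i - S.Q 1 j)) = -S.P i l) :
    ∀ h : ℕ, h < d → lam S h l = 0 := by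
  intro h hh
  rw [lam, Finset.sum_congr rfl fun k (_ : k ∈ Finset.univ) => by
    rw [P_eq_ustar_of_cond2 S hθ hcond k]]
  rw [ustar_ident S hθ hh, mul_zero]

lemma cond2_of_lam_l_zero {l : Fin (d + 1)}
    (hker : ∀ h : ℕ, h < d → lam S h l = 0) :
    ∀ i : Fin (d + 1), i ≠ 0 →
      (∏ j ∈ Finset.univ.filter (fun j => j ≠ 0 ∧ j ≠ i),
        (S.Q 1 0 - S.Q 1 j) / (S.Q 1 i - S.Q 1 j)) = -S.P i l := by
  have hu : (fun k => S.P k l - ustar S k) = 0 := by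
    apply S0Gen.vand_partial _ hθ
    · show S.P 0 l - ustar S 0 = 0
      rw [P_zero S, ustar_zero S hθ, sub_self]
    · intro m hm
      have h1 : ∑ k, S.Q 1 k ^ m * (S.P k l - ustar S k)
          = (∑ k, S.Q 1 k ^ m * S.P k l) - ∑ k, S.Q 1 k ^ m * ustar S k := by
        rw [← Finset.sum_sub_distrib]
        exact Finset.sum_congr rfl fun k _ => by ring
      rw [h1, sum_pow_P S m l, hker m hm, mul_zero, ustar_ident S hθ hm, sub_zero]
  intro i hi
  have h2 := congrFun hu i
  simp only [Pi.zero_apply] at h2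
  have h3 : S.P i l = ustar S i := by linarith [h2]
  rw [Kprod_eq_neg_ustar S hθ hi, h3]

lemma lam_d_ne_of_ker {l : Fin (d + 1)}
    (hker : ∀ h : ℕ, h < d → lam S h l = 0) : lam S d l ≠ 0 := by
  intro h0
  have hall : ∀ i : Fin (d + 1), ∑ k, S.Q 1 k ^ (i : ℕ) * S.P k l = 0 := by
    intro i
    rw [sum_pow_P S (i : ℕ) l]
    rcases Nat.lt_or_ge (i : ℕ) d with hi | hi
    · rw [hker _ hi, mul_zero]
    · have : (i : ℕ) = d := by omega
      rw [this, h0, mul_zero]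
  have := S0Gen.vand_inj _ hθ (u := fun k => S.P k l) hall
  have h1 := congrFun this 0
  simp only [Pi.zero_apply] at h1
  rw [P_zero S] at h1
  exact one_ne_zero h1

end Kernel

lemma exists_walk : ∀ (h : ℕ) (j : Fin (d + 1)), lam S h j ≠ 0 →
    ∃ w : ℕ → Fin (d + 1), w 0 = 0 ∧ w h = j ∧
      (∀ m, m < h → S.krein (w m) 1 (w (m + 1)) ≠ 0) ∧
      (∀ m, m ≤ h → lam S m (w m) ≠ 0) := by
  intro h
  induction h with
  | zero =>
    intro j hj
    have hj0 : j = 0 := by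
      by_contra hc
      rw [lam_zero S j, if_neg hc] at hj
      exact hj rfl
    subst hj0
    exact ⟨fun _ => 0, rfl, rfl, fun m hm => absurd hm (Nat.not_lt_zero m),
      fun m hm => by
        rw [Nat.le_zero.mp hm, lam_zero S 0, if_pos rfl]
        exact nV_ne S⟩
  | succ h ih =>
    intro j hj
    obtain ⟨j', hj', hkj⟩ := (lam_step S h j).mp hj
    obtain ⟨w', hw0, hwh, hedge, hlam⟩ := ih j' hj'
    refine ⟨fun m => if m = h + 1 then j else w' m, by simp [hw0], by simp, ?_, ?_⟩
    · intro m hm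
      have hm1 : m ≠ h + 1 := by omega
      show S.krein (if m = h + 1 then j else w' m) 1
        (if m + 1 = h + 1 then j else w' (m + 1)) ≠ 0
      rw [if_neg hm1]
      by_cases hm2 : m + 1 = h + 1
      · have : m = h := by omega
        subst this
        rw [if_pos rfl, hwh]
        exact hkj
      · rw [if_neg hm2]
        exact hedge m (by omega)
    · intro m hm
      show lam S m (if m = h + 1 then j else w' m) ≠ 0
      by_cases hm1 : m = h + 1
      · rw [if_pos hm1, hm1]
        exact hj
      · rw [if_neg hm1]
        exact hlam m (by omega)

lemma walk_follow (w : ℕ → Fin (d + 1)) (h : ℕ)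
    (hedge : ∀ m, m < h → S.krein (w m) 1 (w (m + 1)) ≠ 0) :
    ∀ (t m a : ℕ), m + t = h → lam S a (w m) ≠ 0 → lam S (a + t) (w h) ≠ 0 := by
  intro t
  induction t with
  | zero =>
    intro m a hm hlam
    rw [Nat.add_zero] at hm ⊢
    rw [← hm]
    exact hlam
  | succ t ih =>
    intro m a hm hlam
    have hstep : lam S (a + 1) (w (m + 1)) ≠ 0 :=
      (lam_step S a (w (m + 1))).mpr ⟨w m, hlam, hedge m (by omega)⟩
    have := ih (m + 1) (a + 1) (by omega) hstep
    have heq : a + 1 + t = a + (t + 1) := by omega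
    rw [heq] at this
    exact this

lemma qpoly_of_ker (hθ : Function.Injective fun j : Fin (d + 1) => S.Q 1 j)
    (hd : 2 ≤ d) {l : Fin (d + 1)}
    (hker : ∀ h : ℕ, h < d → lam S h l = 0) :
    ∃ σ : Equiv.Perm (Fin (d + 1)), σ 0 = 0 ∧ σ 1 = 1 ∧ S.IsQPolyOrdering σ
      ∧ σ (Fin.last d) = l := by
  classical
  have hld : lam S d l ≠ 0 := lam_d_ne_of_ker S hθ hker
  obtain ⟨w, hw0, hwd, hedge, hlam⟩ := exists_walk S d l hld
  -- triangularity of lam along the walk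
  have htri : ∀ (h : ℕ) (r : Fin (d + 1)), h < (r : ℕ) → lam S h (w (r : ℕ)) = 0 := by
    intro h r hlt
    by_contra hc
    have hrd : (r : ℕ) < d + 1 := r.isLt
    have hfo := walk_follow S w d hedge (d - (r : ℕ)) (r : ℕ) h (by omega) hc
    rw [hwd] at hfo
    exact hfo (hker _ (by omega))
  have hdiag : ∀ r : Fin (d + 1), lam S (r : ℕ) (w (r : ℕ)) ≠ 0 := by
    intro r
    have hrd : (r : ℕ) < d + 1 := r.isLt
    exact hlam (r : ℕ) (by omega)
  -- injectivity
  set wf : Fin (d + 1) → Fin (d + 1) := fun m => w (m : ℕ) with hwf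
  have hne : ∀ a b : Fin (d + 1), (a : ℕ) < (b : ℕ) → wf a ≠ wf b := by
    intro a b hab hc
    have had : (a : ℕ) < d + 1 := a.isLt
    have hbd : (b : ℕ) < d + 1 := b.isLt
    have h1 : lam S (a : ℕ) (w (b : ℕ)) ≠ 0 := by
      have h2 : lam S (a : ℕ) (w (a : ℕ)) ≠ 0 := hlam (a : ℕ) (by omega)
      simp only [hwf] at hc
      rw [← hc]
      exact h2
    have hfo := walk_follow S w d hedge (d - (b : ℕ)) (b : ℕ) (a : ℕ) (by omega) h1
    rw [hwd] at hfo
    exact hfo (hker _ (by omega))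
  have hinj : Function.Injective wf := by
    intro a b hc
    rcases lt_trichotomy ((a : ℕ)) ((b : ℕ)) with hlt | heq | hgt
    · exact absurd hc (hne a b hlt)
    · exact Fin.ext heq
    · exact absurd hc.symm (hne b a hgt)
  set σ : Equiv.Perm (Fin (d + 1)) :=
    Equiv.ofBijective wf (Finite.injective_iff_bijective.mp hinj) with hσdef
  have hσ : ∀ m : Fin (d + 1), σ m = w (m : ℕ) := fun m => rfl
  have hσ0 : σ 0 = 0 := by rw [hσ 0]; simpa using hw0
  have hv1 : ((1 : Fin (d + 1)) : ℕ) = 1 := by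
    rw [Fin.val_one', Nat.mod_eq_of_lt (by omega)]
  have hσ1 : σ 1 = 1 := by
    rw [hσ 1, hv1]
    have h1 := hlam 1 (by omega)
    by_contra hcon
    rw [lam_one S, if_neg hcon] at h1
    exact h1 rfl
  have hσl : σ (Fin.last d) = l := by
    rw [hσ (Fin.last d), Fin.val_last, hwd]
  refine ⟨σ, hσ0, hσ1, ?_, hσl⟩
  -- the Q-polynomial property
  intro h
  set U : Matrix (Fin (d + 1)) (Fin (d + 1)) ℝ :=
    Matrix.of (fun r m : Fin (d + 1) => lam S (m : ℕ) (w (r : ℕ))) with hU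
  have hUtri : U.BlockTriangular id := by
    intro r m hlt
    exact htri (m : ℕ) r (by exact_mod_cast hlt)
  have hdet : U.det ≠ 0 := by
    rw [Matrix.det_of_upperTriangular hUtri]
    exact Finset.prod_ne_zero_iff.mpr fun r _ => hdiag r
  have hunit : IsUnit U.det := isUnit_iff_ne_zero.mpr hdet
  have hUU : U * U⁻¹ = 1 := Matrix.mul_nonsing_inv U hunit
  have hUU' : U⁻¹ * U = 1 := Matrix.nonsing_inv_mul U hunit
  have hinvtri : U⁻¹.BlockTriangular id := by
    have : Invertible U := U.invertibleOfIsUnitDet hunit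
    exact Matrix.blockTriangular_inv_of_blockTriangular hUtri
  set b : Fin (d + 1) → ℝ := fun m => U⁻¹ m h with hbdef
  have hb0 : ∀ m : Fin (d + 1), (h : ℕ) < (m : ℕ) → b m = 0 := by
    intro m hm
    exact hinvtri (show (id h : Fin (d + 1)) < id m from by
      rw [Fin.lt_def]; exact hm)
  have hbh : b h * lam S (h : ℕ) (w (h : ℕ)) = 1 := by
    have h1 := congrFun (congrFun hUU' h) h
    rw [Matrix.mul_apply, Matrix.one_apply_eq] at h1
    have h2 : ∑ m, U⁻¹ h m * U m h = U⁻¹ h h * U h h := by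
      refine Finset.sum_eq_single h (fun m _ hm => ?_)
        (fun hmem => absurd (Finset.mem_univ h) hmem)
      rcases lt_trichotomy ((m : ℕ)) ((h : ℕ)) with hlt | heq | hgt
      · rw [show U⁻¹ h m = 0 from hinvtri (show (id m : Fin (d+1)) < id h from by
          rw [Fin.lt_def]; exact hlt), zero_mul]
      · exact absurd (Fin.ext heq) hm
      · rw [show U m h = 0 from hUtri (show (id h : Fin (d+1)) < id m from by
          rw [Fin.lt_def]; exact hgt), mul_zero]
    rw [h2] at h1
    exact h1
  have hbne : b h ≠ 0 := left_ne_zero_of_mul_eq_one hbh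
  set c : Fin (d + 1) → ℝ :=
    fun m => (Fintype.card V : ℝ) * (Fintype.card V : ℝ)⁻¹ ^ (m : ℕ) * b m with hcdef
  have hch : c h ≠ 0 := by
    refine mul_ne_zero (mul_ne_zero (nV_ne S) (pow_ne_zero _ (inv_ne_zero (nV_ne S)))) hbne
  set v : Polynomial ℝ := ∑ m : Fin (d + 1), Polynomial.C (c m) * Polynomial.X ^ (m : ℕ)
    with hvdef
  have hvco : ∀ t : ℕ, v.coeff t = ∑ m : Fin (d + 1), if (m : ℕ) = t then c m else 0 := by
    intro t
    rw [hvdef, Polynomial.finset_sum_coeff]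
    refine Finset.sum_congr rfl fun m _ => ?_
    rw [Polynomial.coeff_C_mul, Polynomial.coeff_X_pow]
    by_cases hm : (m : ℕ) = t
    · rw [if_pos hm, if_pos hm.symm, mul_one]
    · rw [if_neg hm, if_neg (fun hc => hm hc.symm), mul_zero]
  have hvch : v.coeff (h : ℕ) = c h := by
    rw [hvco]
    have : ∀ m : Fin (d + 1), (if (m : ℕ) = (h : ℕ) then c m else 0)
        = if m = h then c m else 0 := by
      intro m
      by_cases hm : m = h
      · subst hm; simp
      · rw [if_neg (fun hc => hm (Fin.ext hc)), if_neg hm]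
    rw [Finset.sum_congr rfl fun m _ => this m, Finset.sum_ite_eq' Finset.univ h]
    simp
  have hvdeg : v.degree = ((h : ℕ) : WithBot ℕ) := by
    have hle : v.degree ≤ ((h : ℕ) : WithBot ℕ) := by
      rw [hvdef]
      refine le_trans (Polynomial.degree_sum_le _ _) ?_
      rw [Finset.sup_le_iff]
      intro m _
      rcases Nat.lt_or_ge ((h : ℕ)) ((m : ℕ)) with hgt | hle2
      · rw [hcdef]
        simp only [hb0 m hgt, mul_zero]
        rw [Polynomial.C_0, zero_mul]
        exact bot_le
      · exact le_trans (Polynomial.degree_C_mul_X_pow_le _ _) (by exact_mod_cast hle2)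
    have hge : ((h : ℕ) : WithBot ℕ) ≤ v.degree :=
      Polynomial.le_degree_of_ne_zero (by rw [hvch]; exact hch)
    exact le_antisymm hle hge
  refine ⟨v, hvdeg, ?_⟩
  -- evaluation identity
  have hveval : ∀ k, v.eval (S.Q 1 k) = ∑ m : Fin (d + 1), c m * S.Q 1 k ^ (m : ℕ) := by
    intro k
    rw [hvdef, Polynomial.eval_finset_sum]
    exact Finset.sum_congr rfl fun m _ => by
      rw [Polynomial.eval_mul, Polynomial.eval_C, Polynomial.eval_pow, Polynomial.eval_X]
  have hcancel : ∀ j, ∑ k, (S.Q (σ h) k - v.eval (S.Q 1 k)) * S.P k j = 0 := by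
    intro j
    have hsplit : ∑ k, (S.Q (σ h) k - v.eval (S.Q 1 k)) * S.P k j
        = (∑ k, S.Q (σ h) k * S.P k j) - ∑ k, v.eval (S.Q 1 k) * S.P k j := by
      rw [← Finset.sum_sub_distrib]
      exact Finset.sum_congr rfl fun k _ => by ring
    have hA : ∑ k, S.Q (σ h) k * S.P k j
        = if σ h = j then (Fintype.card V : ℝ) else 0 := orth S (σ h) j
    have hB : ∑ k, v.eval (S.Q 1 k) * S.P k j
        = ∑ m : Fin (d + 1), (Fintype.card V : ℝ) * b m * lam S (m : ℕ) j := by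
      rw [Finset.sum_congr rfl fun k (_ : k ∈ Finset.univ) => by
        rw [hveval k, Finset.sum_mul]]
      rw [Finset.sum_comm]
      refine Finset.sum_congr rfl fun m _ => ?_
      have : ∑ k, c m * S.Q 1 k ^ (m : ℕ) * S.P k j
          = c m * ((Fintype.card V : ℝ) ^ (m : ℕ) * lam S (m : ℕ) j) := by
        rw [← sum_pow_P S (m : ℕ) j, Finset.mul_sum]
        exact Finset.sum_congr rfl fun k _ => by ring
      rw [this]
      have hcn : (Fintype.card V : ℝ)⁻¹ ^ (m : ℕ) * (Fintype.card V : ℝ) ^ (m : ℕ) = 1 := by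
        rw [← mul_pow, inv_mul_cancel₀ (nV_ne S), one_pow]
      show (Fintype.card V : ℝ) * (Fintype.card V : ℝ)⁻¹ ^ (m : ℕ) * b m
          * ((Fintype.card V : ℝ) ^ (m : ℕ) * lam S (m : ℕ) j)
          = (Fintype.card V : ℝ) * b m * lam S (m : ℕ) j
      linear_combination ((Fintype.card V : ℝ) * b m * lam S (m : ℕ) j) * hcn
    -- identify j with a walk point
    obtain ⟨r, hr⟩ := σ.surjective j
    have hBr : ∑ m : Fin (d + 1), (Fintype.card V : ℝ) * b m * lam S (m : ℕ) j
        = (Fintype.card V : ℝ) * ∑ m, U r m * b m := by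
      rw [Finset.mul_sum]
      refine Finset.sum_congr rfl fun m _ => ?_
      have : U r m = lam S (m : ℕ) j := by
        rw [hU, Matrix.of_apply, ← hr, hσ r]
      rw [this]
      ring
    have hUb : ∑ m, U r m * b m = if r = h then 1 else 0 := by
      have := congrFun (congrFun hUU r) h
      rw [Matrix.mul_apply] at this
      rw [this]
      exact Matrix.one_apply
    have hiff : (σ h = j) ↔ (r = h) := by
      constructor
      · intro hc
        exact σ.injective (hr.trans hc.symm)
      · intro hc
        rw [← hr, hc]
    rw [hsplit, hA, hB, hBr, hUb]
    by_cases hcase : r = h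
    · rw [if_pos (hiff.mpr hcase), if_pos hcase, mul_one, sub_self]
    · rw [if_neg (fun hc => hcase (hiff.mp hc)), if_neg hcase, mul_zero, sub_self]
  have := P_vec_cancel S hcancel
  intro k
  have h2 := congrFun this k
  simp only [Pi.zero_apply] at h2
  linarith [h2]

end S0A





/-- Theorem 1, main theorem. For a symmetric association scheme of
class `d ≥ 2` with `θ*_0, …, θ*_d` mutually distinct: `𝔛` is `Q`-polynomial with
respect to `E_1` iff there is `l ∈ {2, …, d}` with
`∏_{j=1,j≠i}^d (θ*_0 − θ*_j)/(θ*_i − θ*_j) = −p_i(l)` for all `i ∈ {1, …, d}`;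
moreover, in that case `l = i_d`, the last index of any such `Q`-polynomial ordering. -/
theorem statement0 {d : ℕ} {V : Type*} [Fintype V] [DecidableEq V]
    (S : SymmAssocScheme d V) (hd : 2 ≤ d)
    (hθ : Function.Injective fun j : Fin (d + 1) => S.Q 1 j) :
    (S.IsQPolyE1 ↔
      ∃ l : Fin (d + 1), 2 ≤ (l : ℕ) ∧
        ∀ i : Fin (d + 1), i ≠ 0 →
          (∏ j ∈ Finset.univ.filter (fun j => j ≠ 0 ∧ j ≠ i),
            (S.Q 1 0 - S.Q 1 j) / (S.Q 1 i - S.Q 1 j)) = -S.P i l) ∧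
    (∀ l : Fin (d + 1), 2 ≤ (l : ℕ) →
      (∀ i : Fin (d + 1), i ≠ 0 →
        (∏ j ∈ Finset.univ.filter (fun j => j ≠ 0 ∧ j ≠ i),
          (S.Q 1 0 - S.Q 1 j) / (S.Q 1 i - S.Q 1 j)) = -S.P i l) →
      ∀ σ : Equiv.Perm (Fin (d + 1)), σ 0 = 0 → σ 1 = 1 → S.IsQPolyOrdering σ →
        σ (Fin.last d) = l) := by
  have hv1 : ((1 : Fin (d + 1)) : ℕ) = 1 := by
    rw [Fin.val_one', Nat.mod_eq_of_lt (by omega)]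
  constructor
  · constructor
    · rintro ⟨σ, hσ0, hσ1, hσ⟩
      refine ⟨σ (Fin.last d), ?_, ?_⟩
      · -- 2 ≤ σ (last)
        have hl0 : σ (Fin.last d) ≠ 0 := by
          rw [← hσ0]
          intro hc
          have := σ.injective hc
          have h2 := congrArg Fin.val this
          rw [Fin.val_last, Fin.val_zero] at h2
          omega
        have hl1 : σ (Fin.last d) ≠ 1 := by
          rw [← hσ1]
          intro hc
          have := σ.injective hc
          have h2 := congrArg Fin.val this
          rw [Fin.val_last, hv1] at h2
          omega
        have h0 : (σ (Fin.last d) : ℕ) ≠ 0 := fun hc => hl0 (Fin.ext (by simpa using hc))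
        have h1 : (σ (Fin.last d) : ℕ) ≠ 1 := fun hc => hl1 (Fin.ext (by rw [hv1]; exact hc))
        omega
      · -- the product condition
        have hker : ∀ h : ℕ, h < d → S0A.lam S h (σ (Fin.last d)) = 0 := by
          intro h hh
          exact S0A.qpoly_lam_tri S σ hσ (by rw [Fin.val_last]; exact hh) (le_of_lt hh)
        exact S0A.cond2_of_lam_l_zero S hθ hker
    · rintro ⟨l, hl2, hcond⟩
      have hker := S0A.lam_l_zero_of_cond2 S hθ hcond
      obtain ⟨σ, hσ0, hσ1, hord, -⟩ := S0A.qpoly_of_ker S hθ hd hker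
      exact ⟨σ, hσ0, hσ1, hord⟩
  · intro l hl2 hcond σ hσ0 hσ1 hord
    have hker := S0A.lam_l_zero_of_cond2 S hθ hcond
    set r : Fin (d + 1) := σ.symm l with hrdef
    have hlr : σ r = l := σ.apply_symm_apply l
    by_contra hc
    have hrne : r ≠ Fin.last d := by
      intro he
      rw [he] at hlr
      exact hc hlr
    have hrlt : (r : ℕ) < d := by
      have h1 : (r : ℕ) < d + 1 := r.isLt
      have h2 : (r : ℕ) ≠ d := fun he => hrne (Fin.ext (by rw [Fin.val_last]; exact he))
      omega
    have hdiag := S0A.qpoly_lam_diag S σ hord r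
    rw [hlr] at hdiag
    exact hdiag (hker (r : ℕ) hrlt)
end

section
/- Let 𝔛 be a symmetric association scheme of class d ≥ 2 that is a Q-polynomial scheme with respect to the ordering E_0, E_1, …, E_d of its primitive idempotents, and suppose θ*_0, θ*_1, …, θ*_d are mutually distinct. Then for every i ∈ {1, 2, …, d}, ∏_{j=1, j≠i}^d (θ*_0 − θ*_j)/(θ*_i − θ*_j) = −p_i(d). -/
open Matrix BigOperators Finset

section AuxStatement1
open Polynomial
namespace SymmAssocScheme
variable {d : ℕ} {V : Type*} [Fintype V] [DecidableEq V] (S : SymmAssocScheme d V)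

lemma E_linIndep (c : Fin (d+1) → ℂ) (h : ∑ j, c j • S.E j = 0) : ∀ k, c k = 0 := by
  intro k
  have h2 : (∑ j, c j • S.E j) * S.E k = 0 := by rw [h, zero_mul]
  rw [Finset.sum_mul] at h2
  simp only [smul_mul_assoc, S.E_mul] at h2
  rw [Finset.sum_eq_single k] at h2
  · simp only [if_pos rfl] at h2
    exact (smul_eq_zero.mp h2).resolve_right (S.E_ne_zero k)
  · intro b _ hb; simp [hb]
  · simp

lemma cardV_pos (S : SymmAssocScheme d V) : 0 < Fintype.card V := by
  obtain ⟨p, -⟩ := S.R_nonempty 0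
  exact Fintype.card_pos_iff.mpr ⟨p.1⟩

lemma A_zero_eq_one : S.A 0 = 1 := by
  ext x y
  by_cases hxy : x = y
  · rw [S.A_of_mem 0 x y (by rw [S.R_zero]; exact hxy)]
    simp [Matrix.one_apply, hxy]
  · rw [S.A_of_not_mem 0 x y (by rw [S.R_zero]; exact hxy)]
    simp [Matrix.one_apply, hxy]

lemma orthC (h k : Fin (d+1)) :
    ∑ j, (S.Q h j : ℂ) * (S.P j k : ℂ) =
      if h = k then (Fintype.card V : ℂ) else 0 := by
  have hn : (Fintype.card V : ℂ) ≠ 0 := Nat.cast_ne_zero.mpr S.cardV_pos.ne'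
  have h1 : S.E h = ∑ k, ((Fintype.card V : ℂ)⁻¹ * ∑ j, (S.Q h j : ℂ) * S.P j k) • S.E k := by
    calc S.E h = (Fintype.card V : ℂ)⁻¹ • ∑ j, (S.Q h j : ℂ) • S.A j := S.E_eq h
    _ = _ := by
        simp only [S.A_eq, Finset.smul_sum, smul_smul, Finset.mul_sum, Finset.sum_smul,
          mul_assoc]
        rw [Finset.sum_comm]
  have h2 : ∑ k, (((Fintype.card V : ℂ)⁻¹ * ∑ j, (S.Q h j : ℂ) * S.P j k)
      - (if h = k then 1 else 0)) • S.E k = 0 := by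
    simp only [sub_smul, Finset.sum_sub_distrib, ite_smul, one_smul, zero_smul,
      Finset.sum_ite_eq, Finset.mem_univ, if_true, ← h1, sub_self]
  have h3 := S.E_linIndep _ h2 k
  rw [sub_eq_zero] at h3
  have h4 := congrArg (fun z => (Fintype.card V : ℂ) * z) h3
  rw [← mul_assoc, mul_inv_cancel₀ hn, one_mul] at h4
  rw [h4]
  split <;> simp

lemma P_zero_eq_one (k : Fin (d+1)) : S.P 0 k = 1 := by
  have h1 : ∑ j, ((S.P 0 j : ℂ) - 1) • S.E j = 0 := by
    simp only [sub_smul, Finset.sum_sub_distrib, one_smul, S.E_sum, ← S.A_eq, S.A_zero_eq_one,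
      sub_self]
  have := S.E_linIndep _ h1 k
  rw [sub_eq_zero] at this
  exact_mod_cast this

lemma orthR (h k : Fin (d+1)) :
    ∑ j, S.Q h j * S.P j k = if h = k then (Fintype.card V : ℝ) else 0 := by
  have := S.orthC h k
  apply Complex.ofReal_injective
  push_cast
  rw [this]
  split <;> simp

lemma phi_vanish (S : SymmAssocScheme d V)
    (v : Fin (d+1) → Polynomial ℝ) (hdeg : ∀ h, (v h).degree = (h : ℕ))
    (hval : ∀ h j, S.Q h j = (v h).eval (S.Q 1 j)) :
    ∀ m : ℕ, m ≤ d → ∀ f : Polynomial ℝ, f.degree < (m : ℕ) →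
      ∑ j, f.eval (S.Q 1 j) * S.P j (Fin.last d) = 0 := by
  intro m
  induction m with
  | zero =>
    intro _ f hf
    have h0 : f = 0 := by
      rw [← Polynomial.degree_eq_bot]
      exact Nat.WithBot.lt_zero_iff.mp (by simpa using hf)
    simp [h0]
  | succ m ih =>
    intro hmd f hf
    set hm : Fin (d+1) := ⟨m, by omega⟩ with hhm
    have hdm : (v hm).degree = (m : ℕ) := by simpa [hhm] using hdeg hm
    have hvnat : (v hm).natDegree = m := Polynomial.natDegree_eq_of_degree_eq_some hdm
    have hvne : v hm ≠ 0 := fun h0 => by simp [h0] at hdm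
    have hL : (v hm).coeff m ≠ 0 := by
      rw [← hvnat, Polynomial.coeff_natDegree]
      exact Polynomial.leadingCoeff_ne_zero.mpr hvne
    set c := f.coeff m / (v hm).coeff m with hc
    set g := f - Polynomial.C c * v hm with hg
    have hgdeg : g.degree < (m : ℕ) := by
      rw [Polynomial.degree_lt_iff_coeff_zero]
      intro k hk
      rcases eq_or_lt_of_le hk with rfl | hk'
      · simp [hg, Polynomial.coeff_C_mul, hc, div_mul_cancel₀ _ hL]
      · have h1 : f.coeff k = 0 := Polynomial.coeff_eq_zero_of_degree_lt
          (lt_of_lt_of_le hf (by exact_mod_cast hk'))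
        have h2 : (v hm).coeff k = 0 := Polynomial.coeff_eq_zero_of_degree_lt
          (by rw [hdm]; exact_mod_cast hk')
        simp [hg, h1, h2]
    have hv0 : ∑ j, (v hm).eval (S.Q 1 j) * S.P j (Fin.last d) = 0 := by
      rw [Finset.sum_congr rfl fun j _ => by rw [← hval hm j]]
      rw [S.orthR hm (Fin.last d), if_neg]
      intro hcon
      have : m = d := by simpa [hhm, Fin.ext_iff] using hcon
      omega
    have hsum : ∑ j, f.eval (S.Q 1 j) * S.P j (Fin.last d)
        = (∑ j, g.eval (S.Q 1 j) * S.P j (Fin.last d))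
          + c * ∑ j, (v hm).eval (S.Q 1 j) * S.P j (Fin.last d) := by
      rw [Finset.mul_sum, ← Finset.sum_add_distrib]
      refine Finset.sum_congr rfl fun j _ => ?_
      simp only [hg, Polynomial.eval_sub, Polynomial.eval_mul, Polynomial.eval_C]
      ring
    rw [hsum, ih (by omega) g hgdeg, hv0]
    ring

lemma P_last_eq (S : SymmAssocScheme d V)
    (hθ : Function.Injective fun j : Fin (d + 1) => S.Q 1 j)
    (v : Fin (d+1) → Polynomial ℝ) (hdeg : ∀ h, (v h).degree = (h : ℕ))
    (hval : ∀ h j, S.Q h j = (v h).eval (S.Q 1 j)) (i : Fin (d+1)) :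
    S.P i (Fin.last d) = (Lagrange.basis Finset.univ (fun j => S.Q 1 j) i).coeff d
      / (v (Fin.last d)).coeff d * (Fintype.card V : ℝ) := by
  have hinj : Set.InjOn (fun j : Fin (d+1) => S.Q 1 j)
      ↑(Finset.univ : Finset (Fin (d+1))) := hθ.injOn
  set g := Lagrange.basis Finset.univ (fun j : Fin (d+1) => S.Q 1 j) i with hgdef
  have hgnat : g.natDegree = d := by
    rw [hgdef, Lagrange.natDegree_basis hinj (Finset.mem_univ i)]
    simp
  have hgne : g ≠ 0 := Lagrange.basis_ne_zero hinj (Finset.mem_univ i)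
  have hgdeg : g.degree = (d : ℕ) := by
    rw [Polynomial.degree_eq_natDegree hgne, hgnat]
  have hdL : (v (Fin.last d)).degree = (d : ℕ) := by simpa using hdeg (Fin.last d)
  have hLnat : (v (Fin.last d)).natDegree = d := Polynomial.natDegree_eq_of_degree_eq_some hdL
  have hLvne : v (Fin.last d) ≠ 0 := fun h0 => by simp [h0] at hdL
  have hL : (v (Fin.last d)).coeff d ≠ 0 := by
    have h0 := Polynomial.leadingCoeff_ne_zero.mpr hLvne
    rwa [Polynomial.leadingCoeff, hLnat] at h0
  set c := g.coeff d / (v (Fin.last d)).coeff d with hc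
  set r := g - Polynomial.C c * v (Fin.last d) with hr
  have hrdeg : r.degree < (d : ℕ) := by
    rw [Polynomial.degree_lt_iff_coeff_zero]
    intro k hk
    rcases eq_or_lt_of_le hk with rfl | hk'
    · simp [hr, Polynomial.coeff_C_mul, hc, div_mul_cancel₀ _ hL]
    · have h1 : g.coeff k = 0 := Polynomial.coeff_eq_zero_of_degree_lt
        (by rw [hgdeg]; exact_mod_cast hk')
      have h2 : (v (Fin.last d)).coeff k = 0 := Polynomial.coeff_eq_zero_of_degree_lt
        (by rw [hdL]; exact_mod_cast hk')
      simp [hr, h1, h2]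
    
  have hvanish := S.phi_vanish v hdeg hval d le_rfl r hrdeg
  have hvlast : ∑ j, (v (Fin.last d)).eval (S.Q 1 j) * S.P j (Fin.last d)
      = (Fintype.card V : ℝ) := by
    rw [Finset.sum_congr rfl fun j _ => by rw [← hval (Fin.last d) j]]
    rw [S.orthR (Fin.last d) (Fin.last d), if_pos rfl]
  have hsum : ∑ j, g.eval (S.Q 1 j) * S.P j (Fin.last d)
      = (∑ j, r.eval (S.Q 1 j) * S.P j (Fin.last d))
        + c * ∑ j, (v (Fin.last d)).eval (S.Q 1 j) * S.P j (Fin.last d) := by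
    rw [Finset.mul_sum, ← Finset.sum_add_distrib]
    refine Finset.sum_congr rfl fun j _ => ?_
    simp only [hr, Polynomial.eval_sub, Polynomial.eval_mul, Polynomial.eval_C]
    ring
  have heval : ∑ j, g.eval (S.Q 1 j) * S.P j (Fin.last d) = S.P i (Fin.last d) := by
    rw [Finset.sum_eq_single i]
    · rw [hgdef]
      rw [show (S.Q 1 i) = (fun j : Fin (d+1) => S.Q 1 j) i from rfl,
        Lagrange.eval_basis_self hinj (Finset.mem_univ i), one_mul]
    · intro b _ hbi
      rw [hgdef, show (S.Q 1 b) = (fun j : Fin (d+1) => S.Q 1 j) b from rfl,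
        Lagrange.eval_basis_of_ne (Ne.symm hbi) (Finset.mem_univ b), zero_mul]
    · simp
  rw [← heval, hsum, hvanish, hvlast, zero_add, hc]

lemma lagrange_coeff_d (S : SymmAssocScheme d V)
    (hθ : Function.Injective fun j : Fin (d + 1) => S.Q 1 j) (i : Fin (d+1)) :
    (Lagrange.basis Finset.univ (fun j : Fin (d+1) => S.Q 1 j) i).coeff d
      = ∏ j ∈ Finset.univ.erase i, (S.Q 1 i - S.Q 1 j)⁻¹ := by
  have hinj : Set.InjOn (fun j : Fin (d+1) => S.Q 1 j)
      ↑(Finset.univ : Finset (Fin (d+1))) := hθ.injOn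
  have hnat : (Lagrange.basis Finset.univ (fun j : Fin (d+1) => S.Q 1 j) i).natDegree = d := by
    rw [Lagrange.natDegree_basis hinj (Finset.mem_univ i)]; simp
  have h0 : (Lagrange.basis Finset.univ (fun j : Fin (d+1) => S.Q 1 j) i).coeff d
      = (Lagrange.basis Finset.univ (fun j : Fin (d+1) => S.Q 1 j) i).leadingCoeff := by
    rw [Polynomial.leadingCoeff, hnat]
  rw [h0]
  simp only [Lagrange.basis]
  rw [Polynomial.leadingCoeff_prod]
  refine Finset.prod_congr rfl fun j hj => ?_
  rw [Lagrange.basisDivisor, Polynomial.leadingCoeff_mul, Polynomial.leadingCoeff_C,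
    (Polynomial.monic_X_sub_C (S.Q 1 j)).leadingCoeff, mul_one]

end SymmAssocScheme
end AuxStatement1

/-- If `𝔛` is a symmetric association scheme of class `d ≥ 2` that is
`Q`-polynomial with respect to the ordering `E_0, E_1, …, E_d` and `θ*_0, …, θ*_d` are
mutually distinct, then `∏_{j=1,j≠i}^d (θ*_0 − θ*_j)/(θ*_i − θ*_j) = −p_i(d)` for
every `i ∈ {1, …, d}`. -/
theorem statement1 {d : ℕ} {V : Type*} [Fintype V] [DecidableEq V]
    (S : SymmAssocScheme d V) (hd : 2 ≤ d)
    (hθ : Function.Injective fun j : Fin (d + 1) => S.Q 1 j)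
    (hQpoly : S.IsQPolyOrdering (Equiv.refl (Fin (d + 1)))) :
    ∀ i : Fin (d + 1), i ≠ 0 →
      (∏ j ∈ Finset.univ.filter (fun j => j ≠ 0 ∧ j ≠ i),
        (S.Q 1 0 - S.Q 1 j) / (S.Q 1 i - S.Q 1 j)) = -S.P i (Fin.last d) := by
  intro i hi0
  classical
  choose v hdeg hval using hQpoly
  simp only [Equiv.refl_apply] at hval
  have hne : ∀ a b : Fin (d+1), a ≠ b → S.Q 1 a - S.Q 1 b ≠ 0 := fun a b hab =>
    sub_ne_zero_of_ne fun h => hab (hθ h)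
  have hdL : (v (Fin.last d)).degree = (d : ℕ) := by simpa using hdeg (Fin.last d)
  have hLnat : (v (Fin.last d)).natDegree = d := Polynomial.natDegree_eq_of_degree_eq_some hdL
  have hLvne : v (Fin.last d) ≠ 0 := fun h0 => by simp [h0] at hdL
  have hL : (v (Fin.last d)).coeff d ≠ 0 := by
    have h0 := Polynomial.leadingCoeff_ne_zero.mpr hLvne
    rwa [Polynomial.leadingCoeff, hLnat] at h0
  have hnne : (Fintype.card V : ℝ) ≠ 0 := Nat.cast_ne_zero.mpr S.cardV_pos.ne'
  have hkey : ∀ k : Fin (d+1), S.P k (Fin.last d)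
      = (∏ j ∈ Finset.univ.erase k, (S.Q 1 k - S.Q 1 j))⁻¹ / (v (Fin.last d)).coeff d
        * (Fintype.card V : ℝ) := by
    intro k
    rw [S.P_last_eq hθ v hdeg hval k, S.lagrange_coeff_d hθ k, Finset.prod_inv_distrib]
  have h0 := hkey 0
  rw [S.P_zero_eq_one] at h0
  have hi := hkey i
  set T := Finset.univ.filter (fun j : Fin (d+1) => j ≠ 0 ∧ j ≠ i) with hT
  have hT0 : (Finset.univ.erase (0 : Fin (d+1))).erase i = T := by
    ext j
    simp only [hT, Finset.mem_erase, Finset.mem_filter, Finset.mem_univ, true_and, and_true]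
    try tauto
  have hTi : (Finset.univ.erase i).erase (0 : Fin (d+1)) = T := by
    ext j
    simp only [hT, Finset.mem_erase, Finset.mem_filter, Finset.mem_univ, true_and, and_true]
    try tauto
  set x := S.Q 1 0 - S.Q 1 i with hx
  set B0 := ∏ j ∈ T, (S.Q 1 0 - S.Q 1 j) with hB0
  set Bi := ∏ j ∈ T, (S.Q 1 i - S.Q 1 j) with hBi
  have hA0 : ∏ j ∈ Finset.univ.erase (0 : Fin (d+1)), (S.Q 1 0 - S.Q 1 j) = x * B0 := by
    rw [← Finset.mul_prod_erase _ _ (Finset.mem_erase.mpr ⟨hi0, Finset.mem_univ i⟩), hT0]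
  have hAi : ∏ j ∈ Finset.univ.erase i, (S.Q 1 i - S.Q 1 j) = (-x) * Bi := by
    rw [← Finset.mul_prod_erase _ _
      (Finset.mem_erase.mpr ⟨Ne.symm hi0, Finset.mem_univ (0 : Fin (d+1))⟩), hTi, hx]
    ring
  rw [hA0] at h0
  rw [hAi] at hi
  have hxne : x ≠ 0 := hne 0 i (Ne.symm hi0)
  have hB0ne : B0 ≠ 0 := by
    rw [hB0]
    refine Finset.prod_ne_zero_iff.mpr fun j hj => hne 0 j ?_
    have := (Finset.mem_filter.mp hj).2.1
    exact Ne.symm this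
  have hBine : Bi ≠ 0 := by
    rw [hBi]
    refine Finset.prod_ne_zero_iff.mpr fun j hj => hne i j ?_
    have := (Finset.mem_filter.mp hj).2.2
    exact Ne.symm this
  have hgoal : (∏ j ∈ T, (S.Q 1 0 - S.Q 1 j) / (S.Q 1 i - S.Q 1 j)) = B0 / Bi := by
    rw [Finset.prod_div_distrib]
  rw [hgoal, hi]
  field_simp
  field_simp at h0
  rw [hx] at h0
  linear_combination h0
end

section
/- Let 𝔛 be a symmetric association scheme of class d ≥ 2 and let i ∈ {1, 2, …, d−1}. If N_i is empty, then N_{i+1} is also empty. -/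
open Matrix BigOperators Finset

namespace SymmAssocScheme

variable {d : ℕ} {V : Type*} [Fintype V] [DecidableEq V]

/-- the coefficients of `E_1^{∘h}` in the basis of primitive idempotents -/
noncomputable def coeffE1 (S : SymmAssocScheme d V) : ℕ → Fin (d + 1) → ℝ
  | 0, m => if m = 0 then (Fintype.card V : ℝ) else 0
  | h + 1, m => (Fintype.card V : ℝ)⁻¹ * ∑ k, coeffE1 S h k * S.krein k 1 m

lemma nonempty_V (S : SymmAssocScheme d V) : Nonempty V := by
  by_contra h
  rw [not_nonempty_iff] at h
  apply S.E_ne_zero 0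
  ext x y
  exact (h.false x).elim

lemma card_pos (S : SymmAssocScheme d V) : 0 < (Fintype.card V : ℝ) := by
  have := S.nonempty_V
  exact_mod_cast Fintype.card_pos

lemma coeffE1_nonneg (S : SymmAssocScheme d V) : ∀ h m, 0 ≤ S.coeffE1 h m := by
  intro h
  induction h with
  | zero =>
      intro m
      simp only [coeffE1]
      split <;> positivity
  | succ n ih =>
      intro m
      simp only [coeffE1]
      apply mul_nonneg (by positivity)
      exact Finset.sum_nonneg fun k _ => mul_nonneg (ih k) (S.krein_nonneg k 1 m)

lemma sum_hadamard' {n : ℕ} (f : Fin n → Matrix V V ℂ) (N : Matrix V V ℂ) :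
    Matrix.hadamard (∑ m, f m) N = ∑ m, Matrix.hadamard (f m) N := by
  ext x y
  simp [Matrix.hadamard_apply, Matrix.sum_apply, Finset.sum_mul]

lemma hadPow_eq (S : SymmAssocScheme d V) (h : ℕ) :
    S.hadPowE1 h = ∑ m, (S.coeffE1 h m : ℂ) • S.E m := by
  induction h with
  | zero =>
      have hc : ((Fintype.card V : ℝ) : ℂ) ≠ 0 := by
        exact_mod_cast S.card_pos.ne'
      have : ∑ m, (S.coeffE1 0 m : ℂ) • S.E m = ((Fintype.card V : ℝ) : ℂ) • S.E 0 := by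
        rw [Fintype.sum_eq_single (0 : Fin (d + 1))]
        · simp [coeffE1]
        · intro m hm
          simp [coeffE1, hm]
      rw [this, S.E_zero, smul_smul]
      show Matrix.of (fun _ _ => (1 : ℂ)) = _
      push_cast
      rw [mul_inv_cancel₀ (by exact_mod_cast hc), one_smul]
  | succ n ih =>
      have step : S.hadPowE1 (n + 1) = Matrix.hadamard (S.hadPowE1 n) (S.E 1) := rfl
      rw [step, ih, sum_hadamard']
      have h1 : ∀ m : Fin (d + 1),
          Matrix.hadamard ((S.coeffE1 n m : ℂ) • S.E m) (S.E 1)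
          = ∑ k, ((S.coeffE1 n m : ℂ) * ((Fintype.card V : ℂ)⁻¹ * (S.krein m 1 k : ℂ))) • S.E k := by
        intro m
        rw [Matrix.smul_hadamard, S.krein_spec m 1, Finset.smul_sum, Finset.smul_sum]
        refine Finset.sum_congr rfl fun k _ => ?_
        rw [smul_smul, smul_smul, mul_assoc]
      calc ∑ m, Matrix.hadamard ((S.coeffE1 n m : ℂ) • S.E m) (S.E 1)
          = ∑ m, ∑ k, ((S.coeffE1 n m : ℂ) * ((Fintype.card V : ℂ)⁻¹ * (S.krein m 1 k : ℂ))) • S.E k := by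
            exact Finset.sum_congr rfl fun m _ => h1 m
        _ = ∑ k, ∑ m, ((S.coeffE1 n m : ℂ) * ((Fintype.card V : ℂ)⁻¹ * (S.krein m 1 k : ℂ))) • S.E k := by
            exact Finset.sum_comm
        _ = ∑ k, (S.coeffE1 (n + 1) k : ℂ) • S.E k := by
            apply Finset.sum_congr rfl
            intro k _
            rw [← Finset.sum_smul]
            congr 1
            simp only [coeffE1]
            push_cast
            rw [Finset.mul_sum]
            apply Finset.sum_congr rfl
            intro m _
            ring

lemma E_mul_hadPow (S : SymmAssocScheme d V) (h : ℕ) (m : Fin (d + 1)) :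
    S.E m * S.hadPowE1 h = (S.coeffE1 h m : ℂ) • S.E m := by
  rw [S.hadPow_eq h, Finset.mul_sum]
  rw [Fintype.sum_eq_single m]
  · rw [Matrix.mul_smul, S.E_mul, if_pos rfl]
  · intro k hk
    rw [Matrix.mul_smul, S.E_mul, if_neg (Ne.symm hk), smul_zero]

lemma E_mul_hadPow_ne_zero_iff (S : SymmAssocScheme d V) (h : ℕ) (m : Fin (d + 1)) :
    S.E m * S.hadPowE1 h ≠ 0 ↔ 0 < S.coeffE1 h m := by
  rw [S.E_mul_hadPow]
  constructor
  · intro hne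
    rcases lt_or_eq_of_le (S.coeffE1_nonneg h m) with hlt | heq
    · exact hlt
    · exact absurd (by rw [← heq]; simp) hne
  · intro hpos hz
    rcases smul_eq_zero.mp hz with h | h
    · exact absurd h (by exact_mod_cast hpos.ne')
    · exact S.E_ne_zero m h

end SymmAssocScheme

/-- For a symmetric association scheme of class `d ≥ 2` and
`i ∈ {1, …, d−1}`: if `N_i` is empty, then `N_{i+1}` is empty. -/
theorem statement5 {d : ℕ} {V : Type*} [Fintype V] [DecidableEq V]
    (S : SymmAssocScheme d V) (hd : 2 ≤ d)
    (i : ℕ) (hi1 : 1 ≤ i) (hi2 : i ≤ d - 1) (hN : S.N i = ∅) :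
    S.N (i + 1) = ∅ := by
  ext m
  simp only [SymmAssocScheme.N, Set.mem_setOf_eq, Set.mem_empty_iff_false, iff_false, not_and]
  intro hne hall
  -- coefficient of E_m in E_1^{∘(i+1)} is positive
  rw [S.E_mul_hadPow_ne_zero_iff] at hne
  -- extract a k with coeff i k > 0 and krein k 1 m > 0
  simp only [SymmAssocScheme.coeffE1] at hne
  have hsum : 0 < ∑ k, S.coeffE1 i k * S.krein k 1 m := by
    by_contra hle
    push_neg at hle
    have : ∑ k, S.coeffE1 i k * S.krein k 1 m = 0 :=
      le_antisymm hle (Finset.sum_nonneg fun k _ =>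
        mul_nonneg (S.coeffE1_nonneg i k) (S.krein_nonneg k 1 m))
    rw [this, mul_zero] at hne
    exact lt_irrefl 0 hne
  obtain ⟨k, -, hk⟩ : ∃ k ∈ Finset.univ, 0 < S.coeffE1 i k * S.krein k 1 m := by
    by_contra hc
    push_neg at hc
    have : ∑ k, S.coeffE1 i k * S.krein k 1 m ≤ 0 :=
      Finset.sum_nonpos fun k hkk => by
        rcases lt_or_eq_of_le (mul_nonneg (S.coeffE1_nonneg i k) (S.krein_nonneg k 1 m)) with h | h
        · exact absurd h (not_lt.mpr (hc k hkk))
        · exact le_of_eq h.symm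
    exact absurd hsum (not_lt.mpr this)
  have hck : 0 < S.coeffE1 i k := by
    rcases lt_or_eq_of_le (S.coeffE1_nonneg i k) with h | h
    · exact h
    · rw [← h, zero_mul] at hk; exact absurd hk (lt_irrefl 0)
  have hqk : 0 < S.krein k 1 m := by
    rcases lt_or_eq_of_le (S.krein_nonneg k 1 m) with h | h
    · exact h
    · rw [← h, mul_zero] at hk; exact absurd hk (lt_irrefl 0)
  -- since N i = ∅, k is a component of some lower power
  have hkcomp : S.E k * S.hadPowE1 i ≠ 0 := (S.E_mul_hadPow_ne_zero_iff i k).mpr hck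
  have : k ∉ S.N i := by rw [hN]; exact Set.notMem_empty k
  simp only [SymmAssocScheme.N, Set.mem_setOf_eq, not_and, not_forall] at this
  obtain ⟨l, hl, hlne⟩ := this hkcomp
  -- then m is a component of E_1^{∘(l+1)} with l + 1 < i + 1
  have hcl : 0 < S.coeffE1 l k := (S.E_mul_hadPow_ne_zero_iff l k).mp hlne
  have hm : 0 < S.coeffE1 (l + 1) m := by
    simp only [SymmAssocScheme.coeffE1]
    apply mul_pos (inv_pos.mpr S.card_pos)
    have hle : S.coeffE1 l k * S.krein k 1 m ≤ ∑ k', S.coeffE1 l k' * S.krein k' 1 m :=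
      Finset.single_le_sum (fun k' _ =>
        mul_nonneg (S.coeffE1_nonneg l k') (S.krein_nonneg k' 1 m)) (Finset.mem_univ k)
    exact lt_of_lt_of_le (mul_pos hcl hqk) hle
  have := hall (l + 1) (by omega)
  rw [S.E_mul_hadPow] at this
  rcases smul_eq_zero.mp this with h | h
  · exact absurd h (by exact_mod_cast hm.ne')
  · exact S.E_ne_zero m h
end
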